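/- arXiv:1406.4325 — 4 statements merged into one kernel-verified Lean document; each statement's English description precedes it below -/
import Mathlib

section
/- Let n ≥ 1 and let P ⊆ ℝ₊ⁿ be a convex rational polyhedron, i.e. P = ⋂_{j=1}^N H⁺(aʲ, l_j) for some aʲ ∈ ℤⁿ and l_j ∈ ℤ. Then the following are equivalent: (i) P + ℝ₊ⁿ ⊆ P; (ii) there exist finitely many pairs (b¹,k₁),…,(b^M,k_M) ∈ ℤ₊ⁿ × ℤ₊ such that P = ⋂_{j=1}^M H⁺(bʲ, k_j). -/
open Set

/-- For a convex rational polyhedron `P ⊆ ℝ₊ⁿ`, the condition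
`P + ℝ₊ⁿ ⊆ P` is equivalent to `P` being a finite intersection of halfspaces
`H⁺(b, k)` with `b ∈ ℤ₊ⁿ` and `k ∈ ℤ₊`. -/
theorem stmt0 (n : ℕ) (hn : 1 ≤ n) (N : ℕ) (a : Fin N → Fin n → ℤ) (l : Fin N → ℤ)
    (P : Set (Fin n → ℝ))
    (hP : P = ⋂ j, {x : Fin n → ℝ | (l j : ℝ) ≤ ∑ i, (a j i : ℝ) * x i})
    (hpos : P ⊆ {x : Fin n → ℝ | ∀ i, 0 ≤ x i}) :
    (∀ x ∈ P, ∀ y : Fin n → ℝ, (∀ i, 0 ≤ y i) → x + y ∈ P) ↔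
      (∃ (M : ℕ) (b : Fin M → Fin n → ℕ) (k : Fin M → ℕ),
        P = ⋂ j, {x : Fin n → ℝ | (k j : ℝ) ≤ ∑ i, (b j i : ℝ) * x i}) := by
  constructor
  · intro h
    rcases Set.eq_empty_or_nonempty P with hPe | ⟨x₀, hx₀⟩
    · refine ⟨1, fun _ _ => 0, fun _ => 1, ?_⟩
      rw [hPe]
      ext x
      simp
    · -- All coefficients are nonnegative.
      have hA : ∀ j i, 0 ≤ a j i := by
        intro j i
        by_contra hneg
        push_neg at hneg
        have haR : (a j i : ℝ) < 0 := by exact_mod_cast hneg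
        set S := ∑ i', (a j i' : ℝ) * x₀ i' with hS
        have hSl : (l j : ℝ) ≤ S := by
          have hx := hx₀
          rw [hP, Set.mem_iInter] at hx
          exact hx j
        set t : ℝ := (S - l j + 1) / (-(a j i : ℝ)) with ht
        have htpos : 0 ≤ t := div_nonneg (by linarith) (by linarith)
        have hy : x₀ + (fun i' => if i' = i then t else 0) ∈ P := by
          refine h x₀ hx₀ _ (fun i' => ?_)
          by_cases hii : i' = i <;> simp [hii, htpos]
        rw [hP, Set.mem_iInter] at hy
        have hj := hy j
        simp only [Set.mem_setOf_eq, Pi.add_apply] at hj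
        have hsum : ∑ i', (a j i' : ℝ) * (x₀ i' + if i' = i then t else 0)
            = S + (a j i : ℝ) * t := by
          simp only [mul_add, Finset.sum_add_distrib, mul_ite, mul_zero]
          rw [hS]
          congr 1
          simp [Finset.sum_ite_eq, Finset.sum_ite_eq']
        have hat : (a j i : ℝ) * t = -(S - (l j : ℝ) + 1) := by
          have hne : (-(a j i : ℝ)) ≠ 0 := by linarith
          have : (-(a j i : ℝ)) * t = S - (l j : ℝ) + 1 := by
            rw [ht, mul_div_cancel₀ _ hne]
          linarith
        rw [hsum, hat] at hj
        linarith
      -- Build the new representation.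
      refine ⟨N + n,
        fun j i => if hj : (j : ℕ) < N then (a ⟨j, hj⟩ i).toNat
          else if (j : ℕ) = N + (i : ℕ) then 1 else 0,
        fun j => if hj : (j : ℕ) < N then (l ⟨j, hj⟩).toNat else 0, ?_⟩
      ext x
      simp only [Set.mem_iInter, Set.mem_setOf_eq]
      constructor
      · intro hx j
        have hxpos : ∀ i, 0 ≤ x i := hpos hx
        by_cases hj : (j : ℕ) < N
        · simp only [hj, dif_pos]
          have hx' := hx
          rw [hP, Set.mem_iInter] at hx'
          have h1 : (l ⟨j, hj⟩ : ℝ) ≤ ∑ i, (a ⟨j, hj⟩ i : ℝ) * x i := hx' ⟨j, hj⟩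
          have h0 : (0 : ℝ) ≤ ∑ i, (a ⟨j, hj⟩ i : ℝ) * x i := by
            apply Finset.sum_nonneg
            intro i _
            have := hA ⟨j, hj⟩ i
            have : (0:ℝ) ≤ (a ⟨j, hj⟩ i : ℝ) := by exact_mod_cast this
            exact mul_nonneg this (hxpos i)
          have hcast : ∀ i, ((a ⟨j, hj⟩ i).toNat : ℝ) = (a ⟨j, hj⟩ i : ℝ) := by
            intro i
            have := Int.toNat_of_nonneg (hA ⟨j, hj⟩ i)
            exact_mod_cast congrArg (Int.cast : ℤ → ℝ) this
          have hkl : ((l ⟨j, hj⟩).toNat : ℝ) ≤ max (l ⟨j, hj⟩ : ℝ) 0 := by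
            rcases le_or_gt 0 (l ⟨j, hj⟩) with hl | hl
            · have := Int.toNat_of_nonneg hl
              have h2 : ((l ⟨j, hj⟩).toNat : ℝ) = (l ⟨j, hj⟩ : ℝ) := by
                exact_mod_cast congrArg (Int.cast : ℤ → ℝ) this
              rw [h2]; exact le_max_left _ _
            · have : (l ⟨j, hj⟩).toNat = 0 := Int.toNat_of_nonpos hl.le
              rw [this]; simp
          calc ((l ⟨j, hj⟩).toNat : ℝ) ≤ max (l ⟨j, hj⟩ : ℝ) 0 := hkl
            _ ≤ ∑ i, (a ⟨j, hj⟩ i : ℝ) * x i := max_le h1 h0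
            _ = ∑ i, ((a ⟨j, hj⟩ i).toNat : ℝ) * x i := by
                apply Finset.sum_congr rfl
                intro i _
                rw [hcast i]
        · simp only [hj, dif_neg, not_false_iff, Nat.cast_zero]
          apply Finset.sum_nonneg
          intro i _
          refine mul_nonneg ?_ (hxpos i)
          positivity
      · intro hx
        -- First, x ≥ 0.
        have hxpos : ∀ i, 0 ≤ x i := by
          intro i
          have hlt : N + (i : ℕ) < N + n := by omega
          have hj := hx ⟨N + (i : ℕ), hlt⟩
          have hnl : ¬ (N + (i : ℕ) < N) := by omega
          simp only [hnl, dif_neg, not_false_iff, Nat.cast_zero] at hj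
          have hsum : ∑ i' : Fin n, ((if (N + (i : ℕ) = N + i'.val) then (1:ℕ) else 0 : ℕ) : ℝ) * x i'
              = x i := by
            have heq : ∀ i' : Fin n, (N + (i : ℕ) = N + i'.val) ↔ i' = i := by
              intro i'
              constructor
              · intro hh; exact Fin.ext (by omega)
              · intro hh; rw [hh]
            rw [Finset.sum_congr rfl (fun i' _ => by rw [if_congr (heq i') rfl rfl])]
            simp [Finset.sum_ite_eq, Finset.sum_ite_eq']
          rw [hsum] at hj
          exact hj
        rw [hP, Set.mem_iInter]
        intro j'
        have hlt : (j' : ℕ) < N + n := by omega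
        have hj := hx ⟨(j' : ℕ), hlt⟩
        have hjN : ((j' : ℕ) : ℕ) < N := j'.isLt
        simp only [hjN, dif_pos] at hj
        have hje : (⟨(j' : ℕ), hjN⟩ : Fin N) = j' := by ext; rfl
        rw [hje] at hj
        have hcast : ∀ i, ((a j' i).toNat : ℝ) = (a j' i : ℝ) := by
          intro i
          have := Int.toNat_of_nonneg (hA j' i)
          exact_mod_cast congrArg (Int.cast : ℤ → ℝ) this
        have hsum : ∑ i, ((a j' i).toNat : ℝ) * x i = ∑ i, (a j' i : ℝ) * x i := by
          apply Finset.sum_congr rfl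
          intro i _
          rw [hcast i]
        rw [hsum] at hj
        have hkl : (l j' : ℝ) ≤ ((l j').toNat : ℝ) := by
          have := Int.self_le_toNat (l j')
          exact_mod_cast this
        simp only [Set.mem_setOf_eq]
        linarith
  · rintro ⟨M, b, k, hPQ⟩
    intro x hx y hy
    rw [hPQ, Set.mem_iInter] at hx ⊢
    intro j
    have hj := hx j
    simp only [Set.mem_setOf_eq, Pi.add_apply] at hj ⊢
    have hsum : ∑ i, (b j i : ℝ) * (x i + y i)
        = ∑ i, (b j i : ℝ) * x i + ∑ i, (b j i : ℝ) * y i := by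
      rw [← Finset.sum_add_distrib]
      apply Finset.sum_congr rfl
      intro i _
      ring
    rw [hsum]
    have h0 : (0:ℝ) ≤ ∑ i, (b j i : ℝ) * y i := by
      apply Finset.sum_nonneg
      intro i _
      exact mul_nonneg (by positivity) (hy i)
    linarith
end

section
/- Let ψ : ℝ → ℂ be a smooth compactly supported function. Then L₁(s) := ∫₀^∞ yˢ ψ(y) dy converges and is holomorphic on {s ∈ ℂ : Re s > −1}, and it extends to a meromorphic function on ℂ whose poles are all simple and contained in the set of negative integers; moreover, for every positive integer k, lim_{s→−k} (s+k)·L₁(s) = ψ^{(k−1)}(0)/(k−1)!; in particular, lim_{s→−1} (s+1)·L₁(s) = ψ(0). -/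
open Filter Topology MeasureTheory Set

namespace Stmt6Aux

open Complex Asymptotics

lemma isBigO_top {φ : ℝ → ℂ} (hsupp : HasCompactSupport φ) (a : ℝ) :
    φ =O[atTop] (fun x : ℝ => x ^ (-a)) := by
  obtain ⟨R, hR⟩ := hsupp.isCompact.bddAbove
  refine IsBigO.of_bound 0 ?_
  filter_upwards [eventually_gt_atTop R] with x hx
  have hx0 : φ x = 0 :=
    image_eq_zero_of_notMem_tsupport (fun h => absurd (hR h) (not_le.2 hx))
  simp [hx0]

lemma isBigO_bot {φ : ℝ → ℂ} (hc : Continuous φ) :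
    φ =O[𝓝[>] (0:ℝ)] (fun x : ℝ => x ^ (-(0:ℝ))) := by
  have h1 : φ =O[𝓝[>] (0:ℝ)] (fun _ => (1:ℝ)) :=
    ((hc.tendsto 0).mono_left nhdsWithin_le_nhds).isBigO_one ℝ
  refine h1.trans (IsBigO.of_bound 1 ?_)
  filter_upwards [self_mem_nhdsWithin] with x (hx : (0:ℝ) < x)
  simp [Real.rpow_zero]

lemma integrable {φ : ℝ → ℂ} (hc : Continuous φ) (hsupp : HasCompactSupport φ) {s : ℂ}
    (hs : -1 < s.re) :
    IntegrableOn (fun y : ℝ => (y : ℂ) ^ s * φ y) (Ioi 0) := by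
  have h := mellinConvergent_of_isBigO_rpow (f := φ) (s := s + 1) (a := s.re + 2) (b := 0)
    (hc.locallyIntegrable.locallyIntegrableOn _)
    (isBigO_top hsupp _) (by simp only [Complex.add_re, Complex.one_re]; linarith)
    (isBigO_bot hc) (by simp only [Complex.add_re, Complex.one_re]; linarith)
  simpa [MellinConvergent, smul_eq_mul, add_sub_cancel_right] using h

lemma integral_eq_mellin (φ : ℝ → ℂ) :
    (fun s : ℂ => ∫ y in Ioi (0:ℝ), (y:ℂ) ^ s * φ y) = fun s => mellin φ (s + 1) := by
  funext s; simp [mellin, smul_eq_mul, add_sub_cancel_right]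

lemma diffAt {φ : ℝ → ℂ} (hc : Continuous φ) (hsupp : HasCompactSupport φ) {s : ℂ}
    (hs : -1 < s.re) :
    DifferentiableAt ℂ (fun s : ℂ => ∫ y in Ioi (0:ℝ), (y:ℂ) ^ s * φ y) s := by
  rw [integral_eq_mellin]
  have h : DifferentiableAt ℂ (mellin φ) (s + 1) :=
    mellin_differentiableAt_of_isBigO_rpow (a := s.re + 2) (b := 0)
      (hc.locallyIntegrable.locallyIntegrableOn _)
      (isBigO_top hsupp _) (by simp only [Complex.add_re, Complex.one_re]; linarith)
      (isBigO_bot hc) (by simp only [Complex.add_re, Complex.one_re]; linarith)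
  exact h.comp (f := fun s : ℂ => s + 1) s (by fun_prop)

lemma ibp {φ : ℝ → ℂ} (hφ : ContDiff ℝ (⊤ : ℕ∞) φ) (hsupp : HasCompactSupport φ) {s : ℂ}
    (hs : -1 < s.re) :
    ∫ y in Ioi (0:ℝ), (y:ℂ) ^ s * φ y
      = -(s+1)⁻¹ * ∫ y in Ioi (0:ℝ), (y:ℂ) ^ (s+1) * deriv φ y := by
  have hs1 : s ≠ -1 := by
    intro h; rw [h] at hs; simp at hs
  have hs0 : s + 1 ≠ 0 := by
    intro h; exact hs1 (by linear_combination h)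
  have hcφ : Continuous φ := hφ.continuous
  have hdφ : Differentiable ℝ φ := hφ.differentiable (by simp)
  have hcd : Continuous (deriv φ) := hφ.continuous_deriv (mod_cast le_top)
  set g : ℝ → ℂ := fun y => (y:ℂ) ^ (s+1) / (s+1) * φ y with hg
  set g' : ℝ → ℂ := fun y => (y:ℂ) ^ s * φ y + (y:ℂ) ^ (s+1) / (s+1) * deriv φ y with hg'
  have hderiv : ∀ x ∈ Ioi (0:ℝ), HasDerivAt g (g' x) x := by
    intro x hx
    exact (hasDerivAt_ofReal_cpow_const' (ne_of_gt hx) hs1).mul (hdφ x).hasDerivAt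
  have hint1 : IntegrableOn (fun y : ℝ => (y:ℂ) ^ s * φ y) (Ioi 0) :=
    integrable hcφ hsupp hs
  have hint2 : IntegrableOn (fun y : ℝ => (y:ℂ) ^ (s+1) * deriv φ y) (Ioi 0) :=
    integrable hcd hsupp.deriv (by simp only [Complex.add_re, Complex.one_re]; linarith)
  have hint2' : IntegrableOn (fun y : ℝ => (y:ℂ) ^ (s+1) / (s+1) * deriv φ y) (Ioi 0) := by
    refine (hint2.const_mul ((s+1)⁻¹)).congr (Filter.Eventually.of_forall fun y => ?_)
    ring
  have hintg' : IntegrableOn g' (Ioi 0) := hint1.add hint2'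
  have hcontg : ContinuousWithinAt g (Ici 0) 0 := by
    refine Continuous.continuousWithinAt ?_
    exact ((continuous_ofReal_cpow_const
      (show 0 < (s+1).re by simp only [Complex.add_re, Complex.one_re]; linarith)).div_const
        _).mul hcφ
  have htop : Tendsto g atTop (𝓝 0) := by
    obtain ⟨R, hR⟩ := hsupp.isCompact.bddAbove
    refine tendsto_nhds_of_eventually_eq ?_
    filter_upwards [eventually_gt_atTop R] with x hx
    have hx0 : φ x = 0 :=
      image_eq_zero_of_notMem_tsupport (fun h => absurd (hR h) (not_le.2 hx))
    simp [g, hx0]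
  have key := integral_Ioi_of_hasDerivAt_of_tendsto hcontg hderiv hintg' htop
  have hg0 : g 0 = 0 := by
    simp [g, Complex.zero_cpow hs0]
  rw [hg0, sub_zero] at key
  have hsplit : ∫ y in Ioi (0:ℝ), g' y
      = (∫ y in Ioi (0:ℝ), (y:ℂ) ^ s * φ y)
        + ∫ y in Ioi (0:ℝ), (y:ℂ) ^ (s+1) / (s+1) * deriv φ y :=
    integral_add hint1 hint2'
  have hdiv : ∫ y in Ioi (0:ℝ), (y:ℂ) ^ (s+1) / (s+1) * deriv φ y
      = (s+1)⁻¹ * ∫ y in Ioi (0:ℝ), (y:ℂ) ^ (s+1) * deriv φ y := by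
    rw [← integral_const_mul]
    refine setIntegral_congr_fun measurableSet_Ioi (fun y _ => ?_)
    ring
  rw [hsplit, hdiv] at key
  linear_combination key

lemma ftc {φ : ℝ → ℂ} (hφ : ContDiff ℝ (⊤ : ℕ∞) φ) (hsupp : HasCompactSupport φ) :
    ∫ y in Ioi (0:ℝ), deriv φ y = -φ 0 := by
  have hcd : Continuous (deriv φ) := hφ.continuous_deriv (mod_cast le_top)
  have htop : Tendsto φ atTop (𝓝 0) := by
    obtain ⟨R, hR⟩ := hsupp.isCompact.bddAbove
    refine tendsto_nhds_of_eventually_eq ?_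
    filter_upwards [eventually_gt_atTop R] with x hx
    exact image_eq_zero_of_notMem_tsupport (fun h => absurd (hR h) (not_le.2 hx))
  have hint : IntegrableOn (deriv φ) (Ioi 0) :=
    (hcd.integrable_of_hasCompactSupport hsupp.deriv).integrableOn
  have := integral_Ioi_of_hasDerivAt_of_tendsto
    (hφ.continuous.continuousWithinAt)
    (fun x _ => ((hφ.differentiable (by simp)) x).hasDerivAt) hint htop
  rw [this]; ring

lemma prod_cast (k : ℕ) :
    ∏ j ∈ Finset.range k, ((j : ℂ) - k) = (-1) ^ k * (Nat.factorial k : ℂ) := by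
  rw [← Finset.prod_range_reflect]
  have h : ∀ j ∈ Finset.range k, ((k - 1 - j : ℕ) : ℂ) - k = -((j : ℂ) + 1) := by
    intro j hj
    rw [Finset.mem_range] at hj
    have h1 : 1 ≤ k := Nat.one_le_of_lt (Nat.lt_of_le_of_lt (Nat.zero_le j) hj)
    have h2 : j ≤ k - 1 := Nat.le_sub_one_of_lt hj
    push_cast [Nat.cast_sub h2, Nat.cast_sub h1]
    ring
  rw [Finset.prod_congr rfl h]
  have h3 : ∀ j ∈ Finset.range k, -((j : ℂ) + 1) = (-1) * ((j : ℂ) + 1) := by intros; ring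
  rw [Finset.prod_congr rfl h3, Finset.prod_mul_distrib, Finset.prod_const]
  rw [Finset.card_range, ← Finset.prod_range_add_one_eq_factorial k]
  push_cast
  ring

/-- `n`-th iterated integral building block. -/
noncomputable def Gfun (ψ : ℝ → ℂ) (n : ℕ) : ℂ → ℂ :=
  fun s : ℂ => ∫ y in Ioi (0:ℝ), (y:ℂ) ^ s * iteratedDeriv n ψ y

/-- Candidate meromorphic continuation formulas. -/
noncomputable def fp (ψ : ℝ → ℂ) (n : ℕ) (s : ℂ) : ℂ :=
  (-1)^n * (∏ j ∈ Finset.range n, (s + j + 1)⁻¹) * Gfun ψ n (s + n)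

/-- The glued meromorphic continuation. -/
noncomputable def Ffun (ψ : ℝ → ℂ) (s : ℂ) : ℂ := fp ψ (⌊-s.re⌋₊) s

variable {ψ : ℝ → ℂ} (hψ : ContDiff ℝ (⊤ : ℕ∞) ψ) (hsupp : HasCompactSupport ψ)

include hψ in
lemma hCn (n : ℕ) : ContDiff ℝ (⊤ : ℕ∞) (iteratedDeriv n ψ) := by
  rw [iteratedDeriv_eq_iterate]
  exact hψ.iterate_deriv n

include hsupp in
lemma hSn (n : ℕ) : HasCompactSupport (iteratedDeriv n ψ) := by
  induction n with
  | zero => simpa [iteratedDeriv_zero] using hsupp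
  | succ n ih => rw [iteratedDeriv_succ]; exact ih.deriv

include hψ hsupp in
lemma Grec (n : ℕ) {t : ℂ} (ht : -1 < t.re) :
    Gfun ψ n t = -(t+1)⁻¹ * Gfun ψ (n+1) (t+1) := by
  unfold Gfun
  rw [ibp (hCn hψ n) (hSn hsupp n) ht, iteratedDeriv_succ]

include hψ hsupp in
lemma fstep (n : ℕ) {s : ℂ} (hs : -((n:ℝ)+1) < s.re) : fp ψ n s = fp ψ (n+1) s := by
  have ht : -1 < (s + (n:ℂ)).re := by
    simp only [Complex.add_re, Complex.natCast_re]; linarith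
  unfold fp
  rw [Grec hψ hsupp n ht, Finset.prod_range_succ, pow_succ]
  push_cast
  rw [show s + ((n:ℂ) + 1) = s + (n:ℂ) + 1 from by ring]
  ring

include hψ hsupp in
lemma fmono {n m : ℕ} (hnm : n ≤ m) {s : ℂ} (hs : -((n:ℝ)+1) < s.re) : fp ψ n s = fp ψ m s := by
  induction m, hnm using Nat.le_induction with
  | base => rfl
  | succ m hm ih =>
      rw [ih]
      refine fstep hψ hsupp m ?_
      have : (n:ℝ) ≤ m := by exact_mod_cast hm
      linarith

include hψ hsupp in
lemma hFeq (m : ℕ) {s : ℂ} (hs : -((m:ℝ)+1) < s.re) : Ffun ψ s = fp ψ m s := by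
  have h1 : -s.re < (m:ℝ)+1 := by linarith
  have hNm : ⌊-s.re⌋₊ ≤ m := by
    have := (Nat.floor_lt' (Nat.succ_ne_zero m)).mpr (by push_cast; linarith : -s.re < ((m+1 : ℕ) : ℝ))
    omega
  have hN : -((⌊-s.re⌋₊:ℝ)+1) < s.re := by
    have := Nat.lt_floor_add_one (-s.re); linarith
  exact fmono hψ hsupp hNm hN

end Stmt6Aux

open Stmt6Aux

/-- For `ψ ∈ C₀^∞(ℝ)`, the function `L₁(s) = ∫₀^∞ yˢ ψ(y) dy`
converges and is holomorphic on `Re s > -1`, extends meromorphically to `ℂ` with all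
poles simple and contained in the negative integers, and
`lim_{s→-k} (s+k) L₁(s) = ψ^{(k-1)}(0)/(k-1)!`. -/
theorem stmt6 (ψ : ℝ → ℂ) (hψ : ContDiff ℝ (⊤ : ℕ∞) ψ) (hsupp : HasCompactSupport ψ) :
    (∀ s : ℂ, -1 < s.re →
      IntegrableOn (fun y : ℝ => (y : ℂ) ^ s * ψ y) (Set.Ioi 0)) ∧
    DifferentiableOn ℂ (fun s : ℂ => ∫ y in Set.Ioi (0:ℝ), (y : ℂ) ^ s * ψ y)
      {s : ℂ | -1 < s.re} ∧
    ∃ F : ℂ → ℂ,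
      (∀ s : ℂ, -1 < s.re → F s = ∫ y in Set.Ioi (0:ℝ), (y : ℂ) ^ s * ψ y) ∧
      DifferentiableOn ℂ F {s : ℂ | ∀ k : ℕ, s ≠ -((k : ℂ) + 1)} ∧
      ∀ k : ℕ, Tendsto (fun s : ℂ => (s + ((k : ℂ) + 1)) * F s)
        (𝓝[≠] (-((k : ℂ) + 1)))
        (𝓝 (iteratedDeriv k ψ 0 / (Nat.factorial k : ℂ))) := by
  have hcont : Continuous ψ := hψ.continuous
  refine ⟨fun s hs => integrable hcont hsupp hs,
    fun s hs => (diffAt hcont hsupp hs).differentiableWithinAt, Ffun ψ, ?_, ?_, ?_⟩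
  · -- agreement on Re s > -1
    intro s hs
    rw [hFeq hψ hsupp 0 (by push_cast; linarith)]
    simp [fp, Gfun, iteratedDeriv_zero]
  · -- holomorphy away from negative integers
    intro s₀ hs₀
    simp only [mem_setOf_eq] at hs₀
    set m : ℕ := ⌊-s₀.re⌋₊ + 1 with hm_def
    have hm : -((m:ℝ)+1) < s₀.re := by
      have := Nat.lt_floor_add_one (-s₀.re)
      push_cast [hm_def]; linarith
    have hU : IsOpen {s : ℂ | -((m:ℝ)+1) < s.re} :=
      isOpen_lt continuous_const Complex.continuous_re
    have hev : Ffun ψ =ᶠ[𝓝 s₀] fp ψ m := by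
      filter_upwards [hU.mem_nhds hm] with s hs using hFeq hψ hsupp m hs
    have hd : DifferentiableAt ℂ (fp ψ m) s₀ := by
      refine DifferentiableAt.mul (DifferentiableAt.mul (differentiableAt_const _) ?_) ?_
      · refine DifferentiableAt.fun_finsetProd fun j _ => ?_
        refine ((differentiableAt_id.add_const _).add_const _).inv ?_
        intro h
        exact hs₀ j (by linear_combination h)
      · have h1 : -1 < (s₀ + (m:ℂ)).re := by
          simp only [Complex.add_re, Complex.natCast_re]; linarith
        exact (diffAt (hCn hψ m).continuous (hSn hsupp m) h1).comp (f := fun s : ℂ => s + (m:ℂ)) s₀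
          (differentiableAt_id.add_const _)
    exact (hd.congr_of_eventuallyEq hev).differentiableWithinAt
  · -- residues
    intro k
    set s₀ : ℂ := -((k:ℂ)+1) with hs₀_def
    have hs₀re : s₀.re = -((k:ℝ)+1) := by
      simp [hs₀_def]
    set h : ℂ → ℂ := fun s =>
      (-1)^(k+1) * (∏ j ∈ Finset.range k, (s + j + 1)⁻¹) * Gfun ψ (k+1) (s + ((k:ℂ)+1))
      with hh_def
    have hU : IsOpen {s : ℂ | -(((k+1 : ℕ)):ℝ) - 1 < s.re} :=
      isOpen_lt (by fun_prop) Complex.continuous_re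
    have hs₀U : s₀ ∈ {s : ℂ | -(((k+1 : ℕ)):ℝ) - 1 < s.re} := by
      simp only [mem_setOf_eq, hs₀re]; push_cast; linarith
    have hev : (fun s : ℂ => (s + ((k:ℂ)+1)) * Ffun ψ s) =ᶠ[𝓝[≠] s₀] h := by
      filter_upwards [self_mem_nhdsWithin,
        mem_nhdsWithin_of_mem_nhds (hU.mem_nhds hs₀U)] with s hs1 hs2
      have hs2' : -(((k+1:ℕ)):ℝ) - 1 < s.re := hs2
      rw [hFeq hψ hsupp (k+1) (by push_cast at hs2' ⊢; linarith)]
      have hne : s + (k:ℂ) + 1 ≠ 0 := by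
        intro hzero
        exact hs1 (show s = s₀ by rw [hs₀_def]; linear_combination hzero)
      unfold fp
      rw [hh_def, Finset.prod_range_succ]
      push_cast
      set P : ℂ := ∏ j ∈ Finset.range k, (s + j + 1)⁻¹
      set Gv : ℂ := Gfun ψ (k+1) (s + ((k:ℂ)+1))
      linear_combination ((-1:ℂ)^(k+1) * P * Gv) * (mul_inv_cancel₀ hne)
    have hGd : DifferentiableAt ℂ (fun s : ℂ => Gfun ψ (k+1) (s + ((k:ℂ)+1))) s₀ := by
      have h0 : -1 < (s₀ + ((k:ℂ)+1)).re := by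
        rw [show s₀ + ((k:ℂ)+1) = 0 by rw [hs₀_def]; ring]
        simp
      exact (diffAt (hCn hψ (k+1)).continuous (hSn hsupp (k+1)) h0).comp (f := fun s : ℂ => s + ((k:ℂ)+1)) s₀
        (differentiableAt_id.add_const _)
    have hhd : DifferentiableAt ℂ h s₀ := by
      refine DifferentiableAt.mul (DifferentiableAt.mul (differentiableAt_const _) ?_) hGd
      refine DifferentiableAt.fun_finsetProd fun j hj => ?_
      refine ((differentiableAt_id.add_const _).add_const _).inv ?_
      intro hzero
      rw [Finset.mem_range] at hj
      have : (j:ℂ) = (k:ℂ) := by rw [hs₀_def] at hzero; linear_combination hzero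
      exact absurd (Nat.cast_injective this) (Nat.ne_of_lt hj)
    have hP : ∏ j ∈ Finset.range k, (s₀ + j + 1)⁻¹ = ((-1:ℂ)^k * (Nat.factorial k : ℂ))⁻¹ := by
      have := Finset.prod_congr rfl (fun j (_ : j ∈ Finset.range k) =>
        show (s₀ + j + 1)⁻¹ = ((j:ℂ) - k)⁻¹ by rw [hs₀_def]; ring_nf)
      rw [this, Finset.prod_inv_distrib, prod_cast]
    have hG0 : Gfun ψ (k+1) (s₀ + ((k:ℂ)+1)) = -(iteratedDeriv k ψ 0) := by
      rw [show s₀ + ((k:ℂ)+1) = 0 by rw [hs₀_def]; ring]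
      unfold Gfun
      rw [setIntegral_congr_fun measurableSet_Ioi (fun y (_ : y ∈ Ioi (0:ℝ)) => by
        rw [Complex.cpow_zero, one_mul, iteratedDeriv_succ] :
          ∀ y ∈ Ioi (0:ℝ), (y:ℂ)^(0:ℂ) * iteratedDeriv (k+1) ψ y
            = deriv (iteratedDeriv k ψ) y)]
      exact ftc (hCn hψ k) (hSn hsupp k)
    have hval : h s₀ = iteratedDeriv k ψ 0 / (Nat.factorial k : ℂ) := by
      rw [hh_def]
      simp only
      rw [hP, hG0]
      have hfac : (Nat.factorial k : ℂ) ≠ 0 := by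
        exact_mod_cast Nat.factorial_ne_zero k
      have hm1 : ((-1:ℂ))^k ≠ 0 := pow_ne_zero _ (by norm_num)
      have he : ((-1:ℂ))^k * (-1)^k = 1 := by
        rw [← pow_add]; exact Even.neg_one_pow ⟨k, rfl⟩
      have hinv : ((-1:ℂ)^k)⁻¹ = (-1)^k := by rw [← inv_pow, inv_neg, inv_one]
      rw [mul_inv, hinv, pow_succ, div_eq_mul_inv]
      linear_combination (iteratedDeriv k ψ 0 * ((Nat.factorial k : ℂ))⁻¹) * he
    have htends : Tendsto h (𝓝[≠] s₀) (𝓝 (iteratedDeriv k ψ 0 / (Nat.factorial k : ℂ))) := by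
      rw [← hval]
      exact hhd.continuousAt.continuousWithinAt
    exact htends.congr' hev.symm
end

section
/- Let f be a nonflat smooth function on a neighborhood of the origin in ℝⁿ with f(0) = 0, and let p ∈ ℤ₊ⁿ. Set d := d(f,xᵖ) := min{d > 0 : d·(p+𝟏) ∈ Γ₊(f)} and q := d·(p+𝟏). Then q is the unique point of intersection of the ray {t(p+𝟏) : t ≥ 0} with the topological boundary ∂Γ₊(f), and sup{−⟨a, p+𝟏⟩/l_f(a) : a ∈ ℝ₊ⁿ, l_f(a) ≠ 0} = −(p_j+1)/q_j for every j = 1,…,n, = −(⟨p⟩+n)/⟨q⟩ = −1/d, and this supremum is attained. -/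
open Filter Topology MeasureTheory Set

/-- The partial derivative `∂f/∂xᵢ`. -/
noncomputable def pd {n : ℕ} (i : Fin n) (f : (Fin n → ℝ) → ℝ) : (Fin n → ℝ) → ℝ :=
  fun x => fderiv ℝ f x (Pi.single i 1)

/-- The iterated partial derivative `∂^α f` for a multi-index `α`. -/
noncomputable def mderiv {n : ℕ} (α : Fin n → ℕ) (f : (Fin n → ℝ) → ℝ) : (Fin n → ℝ) → ℝ :=
  (List.finRange n).foldr (fun i g => (pd i)^[α i] g) f

/-- The Newton support: multi-indices with nonzero Taylor coefficient at the origin. -/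
def NewtonSupp {n : ℕ} (f : (Fin n → ℝ) → ℝ) : Set (Fin n → ℕ) :=
  {α | mderiv α f 0 ≠ 0}

/-- The Newton polyhedron `Γ₊(f)`. -/
noncomputable def NPoly {n : ℕ} (f : (Fin n → ℝ) → ℝ) : Set (Fin n → ℝ) :=
  convexHull ℝ {x | ∃ α ∈ NewtonSupp f, ∀ i, (α i : ℝ) ≤ x i}

/-- `l_f(a) = min{⟨a,α⟩ : α ∈ Γ₊(f)}`. -/
noncomputable def lfun {n : ℕ} (f : (Fin n → ℝ) → ℝ) (a : Fin n → ℝ) : ℝ :=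
  sInf {r | ∃ x ∈ NPoly f, r = ∑ i, a i * x i}

/-- A face of a polyhedron `P`: a set of the form `P ∩ H(a,l)` for a valid pair `(a,l)`. -/
def IsFace {n : ℕ} (P F : Set (Fin n → ℝ)) : Prop :=
  ∃ (a : Fin n → ℝ) (l : ℝ), (∀ x ∈ P, l ≤ ∑ i, a i * x i) ∧
    F = {x ∈ P | ∑ i, a i * x i = l}

/-- The Taylor coefficient `c_α = ∂^α f(0)/α!`. -/
noncomputable def taylorCoeff {n : ℕ} (f : (Fin n → ℝ) → ℝ) (α : Fin n → ℕ) : ℝ :=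
  mderiv α f 0 / ((∏ i, Nat.factorial (α i) : ℕ) : ℝ)

open Classical in
/-- The `γ`-part of `f`, as a polynomial: `f_γ(x) = ∑_{α ∈ γ ∩ ℤ₊ⁿ} c_α x^α`. -/
noncomputable def gammaPart {n : ℕ} (f : (Fin n → ℝ) → ℝ) (γ : Set (Fin n → ℝ)) :
    (Fin n → ℝ) → ℝ :=
  fun x => ∑ᶠ α : Fin n → ℕ,
    if (fun i => (α i : ℝ)) ∈ γ then taylorCoeff f α * ∏ i, x i ^ α i else 0

/-- Nondegeneracy over `ℝ` with respect to the Newton polyhedron: for every nonempty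
compact face `γ` of `Γ₊(f)`, the gradient of `f_γ` does not vanish on `(ℝ∖{0})ⁿ`. -/
def Nondeg {n : ℕ} (f : (Fin n → ℝ) → ℝ) : Prop :=
  ∀ γ : Set (Fin n → ℝ), IsFace (NPoly f) γ → γ.Nonempty → IsCompact γ →
    ∀ x : Fin n → ℝ, (∀ i, x i ≠ 0) → ∃ i, pd i (gammaPart f γ) x ≠ 0

/-- The class `Ê(U)`: for every valid pair `(a,l) ∈ ℤ₊ⁿ × ℤ₊` of the Newton
polyhedron of `f`, the limit defining the corresponding `γ`-part exists on a
neighborhood of the origin. -/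
def IsEhat {n : ℕ} (U : Set (Fin n → ℝ)) (f : (Fin n → ℝ) → ℝ) : Prop :=
  ∀ (a : Fin n → ℕ) (l : ℕ),
    (∀ x ∈ NPoly f, (l : ℝ) ≤ ∑ i, (a i : ℝ) * x i) →
    ∃ W ∈ 𝓝 (0 : Fin n → ℝ), W ⊆ U ∧ ∀ x ∈ W, ∃ L : ℝ,
      Tendsto (fun t : ℝ => f (fun i => t ^ (a i) * x i) / t ^ l)
        (𝓝[>] (0:ℝ)) (𝓝 L)

/-- The Newton distance `d(f,g) = min{d > 0 : d(Γ₊(g)+𝟏) ⊆ Γ₊(f)}`. -/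
noncomputable def ndist {n : ℕ} (f g : (Fin n → ℝ) → ℝ) : ℝ :=
  sInf {d | 0 < d ∧ ∀ β ∈ NPoly g, (fun i => d * (β i + 1)) ∈ NPoly f}

/-- The Newton distance `d(f,xᵖ) = min{d > 0 : d(p+𝟏) ∈ Γ₊(f)}`. -/
noncomputable def ndistP {n : ℕ} (f : (Fin n → ℝ) → ℝ) (p : Fin n → ℕ) : ℝ :=
  sInf {d | 0 < d ∧ (fun i => d * ((p i : ℝ) + 1)) ∈ NPoly f}

/-- The smallest face `τ_P(α)` of `P` containing `α`. -/
noncomputable def sFace {n : ℕ} (P : Set (Fin n → ℝ)) (α : Fin n → ℝ) : Set (Fin n → ℝ) :=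
  ⋂₀ {F | IsFace P F ∧ α ∈ F}

/-- Dimension of (the affine hull of) a subset of `ℝⁿ`. -/
noncomputable def sdim {n : ℕ} (F : Set (Fin n → ℝ)) : ℕ :=
  Module.finrank ℝ (vectorSpan ℝ F)

/-- `Γ₀(f) = ∂Γ₊(f) ∩ d(f,g)·(Γ₊(g)+𝟏)`. -/
noncomputable def Gamma0 {n : ℕ} (f g : (Fin n → ℝ) → ℝ) : Set (Fin n → ℝ) :=
  frontier (NPoly f) ∩ {x | ∃ β ∈ NPoly g, x = fun i => ndist f g * (β i + 1)}

/-- The Newton multiplicity `m(f,g) = max{n - dim τ_f(α) : α ∈ Γ₀(f)}`. -/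
noncomputable def nmult {n : ℕ} (f g : (Fin n → ℝ) → ℝ) : ℕ :=
  sSup {k | ∃ α ∈ Gamma0 f g, k = n - sdim (sFace (NPoly f) α)}

/-- The Newton multiplicity `m(f,xᵖ) = n - dim τ_f(q)`, `q = d(f,xᵖ)(p+𝟏)`. -/
noncomputable def nmultP {n : ℕ} (f : (Fin n → ℝ) → ℝ) (p : Fin n → ℕ) : ℕ :=
  n - sdim (sFace (NPoly f) (fun i => ndistP f p * ((p i : ℝ) + 1)))

/-- `f` is convenient: `Γ₊(f)` meets every coordinate axis. -/
def Convenient {n : ℕ} (f : (Fin n → ℝ) → ℝ) : Prop :=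
  ∀ i : Fin n, ∃ c : ℝ, (fun j => if j = i then c else 0) ∈ NPoly f

/-- The `γ`-part of `f ∈ Ê(U)` for the face cut out by a valid pair `(a,l)`, defined
as a limit. -/
noncomputable def gpart {n : ℕ} (f : (Fin n → ℝ) → ℝ) (a : Fin n → ℕ) (l : ℕ)
    (x : Fin n → ℝ) : ℝ :=
  limUnder (𝓝[>] (0:ℝ)) (fun t : ℝ => f (fun i => t ^ (a i) * x i) / t ^ l)

section StmtAux

variable {n : ℕ}

lemma mderiv_zero' (f : (Fin n → ℝ) → ℝ) : mderiv 0 f = f := by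
  unfold mderiv
  induction List.finRange n with
  | nil => rfl
  | cons a l ih =>
      simp only [List.foldr_cons, Pi.zero_apply, Function.iterate_zero, id_eq] at ih ⊢
      exact ih

lemma newtonSupp_ne_zero' {f : (Fin n → ℝ) → ℝ} (hf0 : f 0 = 0) {α : Fin n → ℕ}
    (hα : α ∈ NewtonSupp f) : α ≠ 0 := by
  rintro rfl
  exact hα (by rw [mderiv_zero']; exact hf0)

lemma convex_good' : Convex ℝ {x : Fin n → ℝ | (∀ i, 0 ≤ x i) ∧ 1 ≤ ∑ i, x i} := by
  intro x hx y hy a b ha hb hab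
  constructor
  · intro i
    have h1 := hx.1 i; have h2 := hy.1 i
    simp only [Pi.add_apply, Pi.smul_apply, smul_eq_mul]
    nlinarith
  · have hx2 := hx.2; have hy2 := hy.2
    have hsum : ∑ i, (a • x + b • y) i = a * ∑ i, x i + b * ∑ i, y i := by
      simp [Finset.sum_add_distrib, Finset.mul_sum]
    rw [hsum]; nlinarith

lemma npoly_subset_good' {f : (Fin n → ℝ) → ℝ} (hf0 : f 0 = 0) :
    NPoly f ⊆ {x : Fin n → ℝ | (∀ i, 0 ≤ x i) ∧ 1 ≤ ∑ i, x i} := by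
  apply convexHull_min _ convex_good'
  rintro x ⟨α, hα, hle⟩
  obtain ⟨j, hj⟩ := Function.ne_iff.mp (newtonSupp_ne_zero' hf0 hα)
  refine ⟨fun i => le_trans (by positivity) (hle i), ?_⟩
  have h1j : (1:ℝ) ≤ (α j : ℝ) := by exact_mod_cast Nat.one_le_iff_ne_zero.mpr hj
  calc (1:ℝ) ≤ ∑ i, (α i : ℝ) :=
        le_trans h1j (Finset.single_le_sum (f := fun i => (α i : ℝ))
          (fun i _ => by positivity) (Finset.mem_univ j))
    _ ≤ ∑ i, x i := Finset.sum_le_sum fun i _ => hle i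

lemma npoly_add_nonneg' {f : (Fin n → ℝ) → ℝ} {x v : Fin n → ℝ}
    (hx : x ∈ NPoly f) (hv : ∀ i, 0 ≤ v i) : x + v ∈ NPoly f := by
  have hK : Convex ℝ ((fun z => z + v) ⁻¹' NPoly f) :=
    (convex_convexHull ℝ _).translate_preimage_left v
  have hS : {y : Fin n → ℝ | ∃ α ∈ NewtonSupp f, ∀ i, (α i : ℝ) ≤ y i} ⊆
      (fun z => z + v) ⁻¹' NPoly f := by
    rintro s ⟨α, hα, hle⟩
    exact subset_convexHull ℝ _
      ⟨α, hα, fun i => by simp only [Pi.add_apply]; linarith [hle i, hv i]⟩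
  exact convexHull_min hS hK hx

lemma mem_interior_npoly' (hn : 1 ≤ n) {f : (Fin n → ℝ) → ℝ} {x v : Fin n → ℝ}
    (hx : x ∈ closure (NPoly f)) (hv : ∀ i, 0 < v i) : x + v ∈ interior (NPoly f) := by
  haveI : Nonempty (Fin n) := Fin.pos_iff_nonempty.mp hn
  have hne : (Finset.univ : Finset (Fin n)).Nonempty := Finset.univ_nonempty
  set m := Finset.univ.inf' hne v with hm
  have hmpos : 0 < m := by
    rw [hm, Finset.lt_inf'_iff]; exact fun i _ => hv i
  obtain ⟨y, hy, hyd⟩ := Metric.mem_closure_iff.mp hx (m / 2) (by linarith)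
  refine mem_interior.mpr ⟨Metric.ball (x + v) (m / 2), ?_, Metric.isOpen_ball,
    Metric.mem_ball_self (by linarith)⟩
  intro z hz
  have hzy : z = y + (z - y) := by ring
  rw [hzy]
  refine npoly_add_nonneg' hy fun i => ?_
  have h1 : dist (z i) ((x + v) i) ≤ dist z (x + v) := dist_le_pi_dist z (x + v) i
  have h2 : dist (x i) (y i) ≤ dist x y := dist_le_pi_dist x y i
  have hz' : dist z (x + v) < m / 2 := Metric.mem_ball.mp hz
  have hmv : m ≤ v i := Finset.inf'_le v (Finset.mem_univ i)
  have e1 : |z i - (x i + v i)| < m / 2 := by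
    rw [← Real.dist_eq]; simpa [Pi.add_apply] using lt_of_le_of_lt h1 hz'
  have e2 : |x i - y i| < m / 2 := by
    rw [← Real.dist_eq]; exact lt_of_le_of_lt h2 hyd
  have e1' := abs_lt.mp e1
  have e2' := abs_lt.mp e2
  simp only [Pi.sub_apply]
  linarith [e1'.1, e2'.1]

end StmtAux

/-- For `q = d(f,xᵖ)(p+𝟏)`: `q` is the unique intersection point of the
ray through `p+𝟏` with `∂Γ₊(f)`, and
`sup{-⟨a,p+𝟏⟩/l_f(a) : a ∈ ℝ₊ⁿ, l_f(a) ≠ 0} = -(p_j+1)/q_j = -(⟨p⟩+n)/⟨q⟩ = -1/d(f,xᵖ)`,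
the supremum being attained. -/
theorem stmt10 (n : ℕ) (hn : 1 ≤ n) (U : Set (Fin n → ℝ)) (hU : IsOpen U)
    (h0 : (0 : Fin n → ℝ) ∈ U)
    (f : (Fin n → ℝ) → ℝ) (hsm : ContDiffOn ℝ (⊤ : ℕ∞) f U)
    (hnf : (NPoly f).Nonempty) (hf0 : f 0 = 0)
    (p : Fin n → ℕ) (d : ℝ) (hd : d = ndistP f p)
    (q : Fin n → ℝ) (hq : q = fun i => d * ((p i : ℝ) + 1)) :
    (q ∈ frontier (NPoly f) ∧
      ∀ t : ℝ, 0 ≤ t → (fun i => t * ((p i : ℝ) + 1)) ∈ frontier (NPoly f) →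
        (fun i => t * ((p i : ℝ) + 1)) = q) ∧
    IsGreatest {r : ℝ | ∃ a : Fin n → ℝ, (∀ i, 0 ≤ a i) ∧ lfun f a ≠ 0 ∧
      r = -((∑ i, a i * ((p i : ℝ) + 1)) / lfun f a)} (-(1 / d)) ∧
    (∀ j, -(1 / d) = -(((p j : ℝ) + 1) / q j)) ∧
    -(1 / d) = -(((∑ i, (p i : ℝ)) + n) / (∑ i, q i)) := by
  classical
  haveI : Nonempty (Fin n) := Fin.pos_iff_nonempty.mp hn
  obtain ⟨x₀, hx₀⟩ := hnf
  set D : Set ℝ := {t | 0 < t ∧ (fun i => t * ((p i : ℝ) + 1)) ∈ NPoly f} with hDdef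
  have hdD : d = sInf D := hd
  set g : ℝ → Fin n → ℝ := fun t i => t * ((p i : ℝ) + 1) with hgdef
  -- the support is nonempty
  have hSne : {x : Fin n → ℝ | ∃ α ∈ NewtonSupp f, ∀ i, (α i : ℝ) ≤ x i}.Nonempty :=
    convexHull_nonempty_iff.mp ⟨x₀, hx₀⟩
  obtain ⟨x₁, α₀, hα₀, hle₀⟩ := hSne
  -- D is nonempty
  have hDne : D.Nonempty := by
    refine ⟨(Finset.univ.sup α₀ : ℕ) + 1, by positivity, ?_⟩
    refine subset_convexHull ℝ _ ⟨α₀, hα₀, fun i => ?_⟩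
    show (α₀ i : ℝ) ≤ (((Finset.univ.sup α₀ : ℕ) : ℝ) + 1) * ((p i : ℝ) + 1)
    have h1 : (α₀ i : ℝ) ≤ ((Finset.univ.sup α₀ : ℕ) : ℝ) := by
      exact_mod_cast Finset.le_sup (Finset.mem_univ i)
    have h2 : (0:ℝ) ≤ (p i : ℝ) := Nat.cast_nonneg _
    have h3 : (0:ℝ) ≤ ((Finset.univ.sup α₀ : ℕ) : ℝ) := Nat.cast_nonneg _
    nlinarith
  -- D is bounded below by a positive constant
  have hSig : (0:ℝ) < ∑ i, ((p i : ℝ) + 1) :=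
    Finset.sum_pos (fun i _ => by positivity) Finset.univ_nonempty
  have hDlb : ∀ t ∈ D, 1 / (∑ i, ((p i : ℝ) + 1)) ≤ t := by
    intro t ht
    have hm := (npoly_subset_good' hf0 ht.2).2
    have hsum : ∑ i, t * ((p i : ℝ) + 1) = t * ∑ i, ((p i : ℝ) + 1) :=
      (Finset.mul_sum _ _ _).symm
    rw [div_le_iff₀ hSig]
    calc (1:ℝ) ≤ ∑ i, t * ((p i : ℝ) + 1) := hm
      _ = t * ∑ i, ((p i : ℝ) + 1) := hsum
  have hbdd : BddBelow D := ⟨_, hDlb⟩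
  have hdpos : 0 < d := by
    have := le_csInf hDne hDlb
    rw [← hdD] at this
    have h0 : (0:ℝ) < 1 / (∑ i, ((p i : ℝ) + 1)) := by positivity
    linarith
  -- points strictly beyond d on the ray lie in the polyhedron
  have hmaps : ∀ t, d < t → g t ∈ NPoly f := by
    intro t ht
    obtain ⟨t', ht'D, ht'⟩ := exists_lt_of_csInf_lt hDne (show sInf D < t from hdD ▸ ht)
    have hsplit : g t = g t' + (fun i => (t - t') * ((p i : ℝ) + 1)) := by
      funext i; simp only [hgdef, Pi.add_apply]; ring
    rw [hsplit]
    exact npoly_add_nonneg' ht'D.2 fun i => mul_nonneg (by linarith) (by positivity)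
  have hgq : g d = q := by rw [hq]
  have hcont : Continuous g := by
    refine continuous_pi fun i => ?_
    exact continuous_id.mul continuous_const
  have hqcl : q ∈ closure (NPoly f) := by
    have hmt : Set.MapsTo g (Ioi d) (NPoly f) := fun t ht => hmaps t ht
    have h2 := hmt.closure hcont
    rw [← hgq]
    exact h2 (by rw [closure_Ioi]; exact self_mem_Ici)
  have hqni : q ∉ interior (NPoly f) := by
    intro hqint
    have hcg : Filter.Tendsto g (𝓝 d) (𝓝 (g d)) := hcont.continuousAt
    have hev : ∀ᶠ t in 𝓝 d, g t ∈ interior (NPoly f) :=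
      hcg (isOpen_interior.mem_nhds (hgq ▸ hqint))
    have hev2 : ∀ᶠ t in 𝓝[<] d, (g t ∈ interior (NPoly f) ∧ 0 < t) ∧ t ∈ Iio d :=
      ((hev.and (eventually_gt_nhds hdpos)).filter_mono nhdsWithin_le_nhds).and
        eventually_mem_nhdsWithin
    obtain ⟨t, ⟨htmem, htpos⟩, htlt⟩ := hev2.exists
    have htD : t ∈ D := ⟨htpos, interior_subset htmem⟩
    have := csInf_le hbdd htD
    rw [← hdD] at this
    exact absurd htlt (not_lt.mpr this)
  have hqfr : q ∈ frontier (NPoly f) := ⟨hqcl, hqni⟩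
  -- uniqueness on the ray
  have huniq : ∀ t : ℝ, 0 ≤ t → (fun i => t * ((p i : ℝ) + 1)) ∈ frontier (NPoly f) →
      (fun i => t * ((p i : ℝ) + 1)) = q := by
    intro t ht htfr
    have h1 : ¬ d < t := by
      intro hlt
      have hsplit : g t = q + (fun i => (t - d) * ((p i : ℝ) + 1)) := by
        funext i; rw [hq]; simp only [hgdef, Pi.add_apply]; ring
      have : g t ∈ interior (NPoly f) := by
        rw [hsplit]
        exact mem_interior_npoly' hn hqcl fun i => by
          have h3 : (0:ℝ) < t - d := sub_pos.mpr hlt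
          positivity
      exact htfr.2 this
    have h2 : d ≤ t := by
      by_contra h2
      push_neg at h2
      set s : ℝ := (t + d) / 2 with hs
      have hts : t < s := by rw [hs]; linarith
      have hsd : s < d := by rw [hs]; linarith
      have hspos : 0 < s := by rw [hs]; linarith
      have hsplit : g s = g t + (fun i => (s - t) * ((p i : ℝ) + 1)) := by
        funext i; simp only [hgdef, Pi.add_apply]; ring
      have hgsmem : g s ∈ NPoly f := by
        rw [hsplit]
        exact interior_subset (mem_interior_npoly' hn htfr.1 fun i => by
          have h3 : (0:ℝ) < s - t := sub_pos.mpr hts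
          positivity)
      have hsD : s ∈ D := ⟨hspos, hgsmem⟩
      have := csInf_le hbdd hsD
      rw [← hdD] at this
      linarith
    have htd : t = d := le_antisymm (not_lt.mp h1) h2
    rw [htd, hq]
  -- the supporting functional via Hahn–Banach
  have hconv : Convex ℝ (NPoly f) := convex_convexHull ℝ _
  have hy₀ : x₀ + (1 : Fin n → ℝ) ∈ interior (NPoly f) :=
    mem_interior_npoly' hn (subset_closure hx₀) fun i => by norm_num
  obtain ⟨φ, hφ⟩ := geometric_hahn_banach_open_point hconv.interior isOpen_interior hqni
  set a : Fin n → ℝ := fun i => -φ (fun j => if i = j then 1 else 0) with hadef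
  have hrep : ∀ x : Fin n → ℝ, -φ x = ∑ i, a i * x i := by
    intro x
    have h1 : φ x = ∑ i, x i * φ (fun j => if i = j then 1 else 0) := by
      conv_lhs => rw [pi_eq_sum_univ x]
      rw [map_sum]
      exact Finset.sum_congr rfl fun i _ => by rw [_root_.map_smul, smul_eq_mul]
    rw [h1, ← Finset.sum_neg_distrib]
    exact Finset.sum_congr rfl fun i _ => by rw [hadef]; ring
  have hψle : ∀ x ∈ NPoly f, -φ q ≤ -φ x := by
    intro x hx
    have key : ∀ t : ℝ, 0 < t → -φ q < -φ x + t * (-φ (fun _ => (1:ℝ))) := by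
      intro t ht
      have hmem : x + (fun _ => t) ∈ interior (NPoly f) :=
        mem_interior_npoly' hn (subset_closure hx) fun i => ht
      have h2 := hφ _ hmem
      have h3 : (x + fun _ => t) = x + t • (fun _ => (1:ℝ)) := by funext i; simp
      rw [h3, map_add, _root_.map_smul, smul_eq_mul] at h2
      linarith
    by_contra hcon
    push_neg at hcon
    set B := -φ (fun _ => (1:ℝ)) with hB
    rcases le_or_gt B 0 with hBle | hBpos
    · have := key 1 one_pos
      nlinarith
    · set t : ℝ := (-φ q - -φ x) / (2 * B) with htdef
      have htpos : 0 < t := div_pos (by linarith) (by linarith)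
      have h4 := key t htpos
      have h5 : t * B = (-φ q - -φ x) / 2 := by
        rw [htdef]; field_simp
      rw [h5] at h4
      linarith
  have hanneg : ∀ i, 0 ≤ a i := by
    intro i
    by_contra hai
    push_neg at hai
    have h0 : -φ q ≤ -φ x₀ := hψle _ hx₀
    set s : ℝ := (-φ x₀ - -φ q + 1) / (-a i) with hsdef
    have hspos : 0 < s := div_pos (by linarith) (by linarith)
    have hmem : x₀ + s • (fun j => if i = j then (1:ℝ) else 0) ∈ NPoly f := by
      refine npoly_add_nonneg' hx₀ fun j => ?_
      simp only [Pi.smul_apply, smul_eq_mul]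
      split_ifs <;> simp [hspos.le]
    have h2 := hψle _ hmem
    have hsplit : φ (x₀ + s • (fun j => if i = j then (1:ℝ) else 0)) =
        φ x₀ + s * φ (fun j => if i = j then (1:ℝ) else 0) := by
      rw [map_add, _root_.map_smul, smul_eq_mul]
    rw [hsplit] at h2
    have hval : a i = -φ (fun j => if i = j then (1:ℝ) else 0) := by rw [hadef]
    have hane : -a i ≠ 0 := ne_of_gt (by linarith)
    have hcalc : s * a i = -(-φ x₀ - -φ q + 1) := by
      rw [hsdef, div_mul_eq_mul_div, div_eq_iff hane]; ring
    nlinarith [h2, hcalc, hval]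
  have hex : ∃ j, a j ≠ 0 := by
    by_contra hall
    push_neg at hall
    have h1 : -φ q = 0 := by rw [hrep q]; simp [hall]
    have h2 : -φ (x₀ + 1) = 0 := by rw [hrep]; simp [hall]
    have h3 := hφ _ hy₀
    linarith
  obtain ⟨j₀, hj₀⟩ := hex
  have hApos : 0 < ∑ i, a i * ((p i : ℝ) + 1) := by
    refine Finset.sum_pos' (fun i _ => mul_nonneg (hanneg i) (by positivity))
      ⟨j₀, Finset.mem_univ j₀, ?_⟩
    have h1 : 0 < a j₀ := lt_of_le_of_ne (hanneg j₀) (Ne.symm hj₀)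
    positivity
  have hqi : ∀ i, q i = d * ((p i : ℝ) + 1) := fun i => by rw [hq]
  have hφqA : -φ q = d * ∑ i, a i * ((p i : ℝ) + 1) := by
    rw [hrep q, Finset.mul_sum]
    exact Finset.sum_congr rfl fun i _ => by rw [hqi i]; ring
  -- upper bound machinery for lfun
  have hlf_nonneg : ∀ b : Fin n → ℝ, (∀ i, 0 ≤ b i) → 0 ≤ lfun f b := by
    intro b hb
    refine le_csInf ⟨_, x₀, hx₀, rfl⟩ ?_
    rintro r ⟨x, hx, rfl⟩
    exact Finset.sum_nonneg fun i _ => mul_nonneg (hb i) ((npoly_subset_good' hf0 hx).1 i)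
  have hlf_le : ∀ b : Fin n → ℝ, (∀ i, 0 ≤ b i) →
      lfun f b ≤ d * ∑ i, b i * ((p i : ℝ) + 1) := by
    intro b hb
    have hAb0 : 0 ≤ ∑ i, b i * ((p i : ℝ) + 1) :=
      Finset.sum_nonneg fun i _ => mul_nonneg (hb i) (by positivity)
    have hbdd' : BddBelow {r | ∃ x ∈ NPoly f, r = ∑ i, b i * x i} := by
      refine ⟨0, ?_⟩
      rintro r ⟨x, hx, rfl⟩
      exact Finset.sum_nonneg fun i _ => mul_nonneg (hb i) ((npoly_subset_good' hf0 hx).1 i)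
    have hstep : ∀ t, d < t → lfun f b ≤ t * ∑ i, b i * ((p i : ℝ) + 1) := by
      intro t ht
      have hgt : g t ∈ NPoly f := hmaps t ht
      have heq : (∑ i, b i * g t i) = t * ∑ i, b i * ((p i : ℝ) + 1) := by
        rw [Finset.mul_sum]
        exact Finset.sum_congr rfl fun i _ => by simp only [hgdef]; ring
      exact csInf_le hbdd' ⟨g t, hgt, heq.symm⟩
    by_contra hcon
    push_neg at hcon
    set Ab := ∑ i, b i * ((p i : ℝ) + 1) with hAbdef
    have hAbpos : 0 < Ab := by
      rcases eq_or_lt_of_le hAb0 with h | h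
      · exfalso
        have h1 := hstep (d + 1) (by linarith)
        rw [← h] at h1 hcon
        simp only [mul_zero] at h1 hcon
        linarith
      · exact h
    set t : ℝ := d + (lfun f b - d * Ab) / (2 * Ab) with htdef
    have htd : d < t := by
      have h1 : 0 < (lfun f b - d * Ab) / (2 * Ab) := div_pos (by linarith) (by linarith)
      rw [htdef]; linarith
    have h2 := hstep t htd
    have hexp : t * Ab = d * Ab + (lfun f b - d * Ab) / 2 := by
      rw [htdef]; field_simp
    rw [hexp] at h2
    linarith
  have hlfa : lfun f a = d * ∑ i, a i * ((p i : ℝ) + 1) := by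
    have hub := hlf_le a hanneg
    have hlb : d * ∑ i, a i * ((p i : ℝ) + 1) ≤ lfun f a := by
      refine le_csInf ⟨_, x₀, hx₀, rfl⟩ ?_
      rintro r ⟨x, hx, rfl⟩
      have h1 := hψle x hx
      rw [hrep x] at h1
      rw [← hφqA]
      exact h1
    linarith
  have hlfa_ne : lfun f a ≠ 0 := by
    rw [hlfa]; exact (mul_pos hdpos hApos).ne'
  have hdne : d ≠ 0 := hdpos.ne'
  refine ⟨⟨hqfr, huniq⟩, ⟨⟨a, hanneg, hlfa_ne, ?_⟩, ?_⟩, ?_, ?_⟩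
  · rw [hlfa]
    rw [neg_inj, eq_div_iff (mul_pos hdpos hApos).ne']
    field_simp
  · rintro r ⟨b, hb, hlb0, rfl⟩
    have h1 := hlf_le b hb
    have hlfpos : 0 < lfun f b := lt_of_le_of_ne (hlf_nonneg b hb) (Ne.symm hlb0)
    have hAbpos : 0 < ∑ i, b i * ((p i : ℝ) + 1) := by nlinarith
    have h2 : 1 / d ≤ (∑ i, b i * ((p i : ℝ) + 1)) / lfun f b := by
      rw [div_le_div_iff₀ hdpos hlfpos]
      nlinarith
    linarith [neg_le_neg h2]
  · intro j
    have hc : ((p j : ℝ) + 1) ≠ 0 := by positivity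
    rw [hqi j, neg_inj]
    field_simp
  · have hsq : ∑ i, q i = d * ((∑ i, (p i : ℝ)) + n) := by
      have h1 : ∑ i, q i = d * ∑ i, ((p i : ℝ) + 1) := by
        rw [Finset.mul_sum]
        exact Finset.sum_congr rfl fun i _ => by rw [hqi i]
      have h2 : ∑ i, ((p i : ℝ) + 1) = (∑ i, (p i : ℝ)) + n := by
        rw [Finset.sum_add_distrib]
        simp [Finset.card_univ]
      rw [h1, h2]
    have hden : (0:ℝ) < (∑ i, (p i : ℝ)) + n := by
      have h1 : (0:ℝ) ≤ ∑ i, (p i : ℝ) := Finset.sum_nonneg fun i _ => by positivity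
      have hn' : (1:ℝ) ≤ n := by exact_mod_cast hn
      linarith
    rw [hsq, neg_inj]
    field_simp
end

section
/- Let f and g be nonflat smooth functions on a neighborhood of the origin in ℝⁿ with f(0) = 0. Then: (i) for every d > 0, the inclusion d·(Γ₊(g)+𝟏) ⊆ Γ₊(f) holds if and only if d·(l_g(a) + ⟨a,𝟏⟩) ≥ l_f(a) for all a ∈ ℝ₊ⁿ; and (ii) sup{−(l_g(a)+⟨a,𝟏⟩)/l_f(a) : a ∈ ℝ₊ⁿ, l_f(a) ≠ 0} = −1/d(f,g), and this supremum is attained. -/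
open Filter Topology MeasureTheory Set

namespace Stmt11Aux
variable {n : ℕ}

/-- every element of `S` lies above a minimal element -/
lemma exists_min_cover (S : Set (Fin n → ℕ)) :
    ∀ s ∈ S, ∃ m ∈ S, (∀ i, m i ≤ s i) ∧ ∀ m' ∈ S, (∀ i, m' i ≤ m i) → m' = m := by
  have key : ∀ N : ℕ, ∀ s ∈ S, (∑ i, s i) ≤ N →
      ∃ m ∈ S, (∀ i, m i ≤ s i) ∧ ∀ m' ∈ S, (∀ i, m' i ≤ m i) → m' = m := by
    intro N
    induction N with
    | zero =>
      intro s hs hsum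
      refine ⟨s, hs, fun i => le_rfl, fun m' hm' hle => funext fun i => ?_⟩
      have h1 : s i = 0 := by
        have := Finset.single_le_sum (f := s) (fun i _ => Nat.zero_le _) (Finset.mem_univ i)
        omega
      have := hle i; omega
    | succ N ih =>
      intro s hs hsum
      by_cases h : ∀ m' ∈ S, (∀ i, m' i ≤ s i) → m' = s
      · exact ⟨s, hs, fun i => le_rfl, h⟩
      · push_neg at h
        obtain ⟨m', hm', hle, hne⟩ := h
        have hlt : ∑ i, m' i < ∑ i, s i := by
          apply Finset.sum_lt_sum (fun i _ => hle i)
          by_contra hc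
          push_neg at hc
          exact hne (funext fun i => le_antisymm (hle i) (hc i (Finset.mem_univ i)))
        obtain ⟨m, hm, hle2, hmin⟩ := ih m' hm' (by omega)
        exact ⟨m, hm, fun i => (hle2 i).trans (hle i), hmin⟩
  intro s hs
  exact key (∑ i, s i) s hs le_rfl

/-- Dickson's lemma packaged: a finite covering subset -/
lemma dickson (S : Set (Fin n → ℕ)) (hS : S.Nonempty) :
    ∃ V : Finset (Fin n → ℕ), V.Nonempty ∧ ↑V ⊆ S ∧ ∀ s ∈ S, ∃ v ∈ V, ∀ i, v i ≤ s i := by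
  set M := {m ∈ S | ∀ m' ∈ S, (∀ i, m' i ≤ m i) → m' = m} with hM
  have hMfin : M.Finite := by
    by_contra hinf
    rw [← Set.Infinite] at hinf
    obtain f := hinf.natEmbedding
    have hpwo : M.IsPWO :=
      Set.isPWO_of_wellQuasiOrderedLE M
    obtain ⟨a, b, hab, hle⟩ := hpwo (fun k => f k)
    have heq : (f a : Fin n → ℕ) = (f b : Fin n → ℕ) :=
      (f b).2.2 (f a : Fin n → ℕ) (f a).2.1 (fun i => hle i)
    exact absurd (f.injective (Subtype.ext heq)) (by omega)
  obtain ⟨s₀, hs₀⟩ := hS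
  obtain ⟨m₀, hm₀, _, hmin₀⟩ := exists_min_cover S s₀ hs₀
  refine ⟨hMfin.toFinset, ⟨m₀, ?_⟩, ?_, ?_⟩
  · rw [Set.Finite.mem_toFinset]; exact ⟨hm₀, hmin₀⟩
  · intro v hv
    rw [Finset.mem_coe, Set.Finite.mem_toFinset] at hv
    exact hv.1
  · intro s hs
    obtain ⟨m, hm, hle, hmin⟩ := exists_min_cover S s hs
    exact ⟨m, by rw [Set.Finite.mem_toFinset]; exact ⟨hm, hmin⟩, hle⟩


open Pointwise

def orth (n : ℕ) : Set (Fin n → ℝ) := {x | ∀ i, 0 ≤ x i}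

lemma convex_orth : Convex ℝ (orth n) := by
  intro x hx y hy a b ha hb _ i
  simp only [Pi.add_apply, Pi.smul_apply, smul_eq_mul]
  exact add_nonneg (mul_nonneg ha (hx i)) (mul_nonneg hb (hy i))

lemma isClosed_orth : IsClosed (orth n) := by
  have h : orth n = ⋂ i, {x : Fin n → ℝ | 0 ≤ x i} := by ext x; simp [orth]
  rw [h]
  exact isClosed_iInter fun i => isClosed_le continuous_const (continuous_apply i)

def toR : (Fin n → ℕ) → (Fin n → ℝ) := fun α i => (α i : ℝ)

lemma upSet_eq {S : Set (Fin n → ℕ)} {V : Finset (Fin n → ℕ)} (hVS : ↑V ⊆ S)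
    (hcov : ∀ s ∈ S, ∃ v ∈ V, ∀ i, v i ≤ s i) :
    {x : Fin n → ℝ | ∃ α ∈ S, ∀ i, (α i : ℝ) ≤ x i} = toR (n := n) '' ↑V + orth n := by
  ext x
  rw [Set.mem_add]
  constructor
  · rintro ⟨α, hα, hle⟩
    obtain ⟨v, hv, hvle⟩ := hcov α hα
    refine ⟨toR v, Set.mem_image_of_mem _ hv, x - toR v, fun i => ?_, by abel⟩
    have h1 : (v i : ℝ) ≤ (α i : ℝ) := Nat.cast_le.2 (hvle i)
    have h2 := hle i
    simp only [Pi.sub_apply, toR, sub_nonneg]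
    linarith
  · rintro ⟨y, ⟨v, hv, rfl⟩, c, hc, rfl⟩
    refine ⟨v, hVS hv, fun i => ?_⟩
    simp only [Pi.add_apply, toR]
    exact le_add_of_nonneg_right (hc i)

lemma npoly_decomp {f : (Fin n → ℝ) → ℝ} {V : Finset (Fin n → ℕ)} (hVS : ↑V ⊆ NewtonSupp f)
    (hcov : ∀ s ∈ NewtonSupp f, ∃ v ∈ V, ∀ i, v i ≤ s i) :
    NPoly f = convexHull ℝ (toR (n := n) '' ↑V) + orth n := by
  rw [NPoly, upSet_eq hVS hcov, convexHull_add, convex_orth.convexHull_eq]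

lemma npoly_subset_orth (f : (Fin n → ℝ) → ℝ) : NPoly f ⊆ orth n := by
  apply convexHull_min _ convex_orth
  rintro x ⟨α, _, hle⟩ i
  exact le_trans (Nat.cast_nonneg _) (hle i)

lemma isLinear_dot (a : Fin n → ℝ) : IsLinearMap ℝ (fun y : Fin n → ℝ => ∑ i, a i * y i) := by
  constructor
  · intro x y; simp [Pi.add_apply, mul_add, Finset.sum_add_distrib]
  · intro c x
    simp only [Pi.smul_apply, smul_eq_mul, Finset.mul_sum]
    exact Finset.sum_congr rfl fun i _ => by ring

lemma toR_mem_npoly {f : (Fin n → ℝ) → ℝ} {V : Finset (Fin n → ℕ)}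
    (hVS : ↑V ⊆ NewtonSupp f) {v : Fin n → ℕ} (hv : v ∈ V) : toR v ∈ NPoly f :=
  subset_convexHull ℝ _ ⟨v, hVS hv, fun i => le_rfl⟩

set_option maxHeartbeats 1000000 in
lemma inf'_le_dot {f : (Fin n → ℝ) → ℝ} {V : Finset (Fin n → ℕ)} (hne : V.Nonempty)
    (hVS : ↑V ⊆ NewtonSupp f) (hcov : ∀ s ∈ NewtonSupp f, ∃ v ∈ V, ∀ i, v i ≤ s i)
    {a : Fin n → ℝ} (ha : ∀ i, 0 ≤ a i) {x : Fin n → ℝ} (hx : x ∈ NPoly f) :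
    V.inf' hne (fun v => ∑ i, a i * (v i : ℝ)) ≤ ∑ i, a i * x i := by
  rw [npoly_decomp hVS hcov, Set.mem_add] at hx
  obtain ⟨q, hq, c, hc, rfl⟩ := hx
  have hq' : V.inf' hne (fun v => ∑ i, a i * (v i : ℝ)) ≤ ∑ i, a i * q i := by
    have hsub : toR '' ↑V ⊆
        {y : Fin n → ℝ | V.inf' hne (fun v => ∑ i, a i * (v i : ℝ)) ≤ ∑ i, a i * y i} := by
      rintro y ⟨v, hv, rfl⟩
      exact Finset.inf'_le (fun v => ∑ i, a i * (v i : ℝ)) (Finset.mem_coe.1 hv)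
    exact convexHull_min hsub (convex_halfSpace_ge (isLinear_dot a) _) hq
  have hc' : (0:ℝ) ≤ ∑ i, a i * c i := Finset.sum_nonneg fun i _ => mul_nonneg (ha i) (hc i)
  calc V.inf' hne (fun v => ∑ i, a i * (v i : ℝ)) ≤ ∑ i, a i * q i := hq'
    _ ≤ ∑ i, a i * (q + c) i := by
        simp only [Pi.add_apply, mul_add, Finset.sum_add_distrib]; linarith

lemma lfun_eq {f : (Fin n → ℝ) → ℝ} {V : Finset (Fin n → ℕ)} (hne : V.Nonempty)
    (hVS : ↑V ⊆ NewtonSupp f) (hcov : ∀ s ∈ NewtonSupp f, ∃ v ∈ V, ∀ i, v i ≤ s i)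
    {a : Fin n → ℝ} (ha : ∀ i, 0 ≤ a i) :
    lfun f a = V.inf' hne (fun v => ∑ i, a i * (v i : ℝ)) := by
  apply IsLeast.csInf_eq
  constructor
  · obtain ⟨v₀, hv₀, hval⟩ := Finset.exists_mem_eq_inf' hne (fun v => ∑ i, a i * (v i : ℝ))
    exact ⟨toR v₀, toR_mem_npoly hVS hv₀, hval⟩
  · rintro r ⟨x, hx, rfl⟩
    exact inf'_le_dot hne hVS hcov ha hx

set_option maxHeartbeats 1000000 in
lemma mem_npoly_of_forall {f : (Fin n → ℝ) → ℝ} {V : Finset (Fin n → ℕ)} (hne : V.Nonempty)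
    (hVS : ↑V ⊆ NewtonSupp f) (hcov : ∀ s ∈ NewtonSupp f, ∃ v ∈ V, ∀ i, v i ≤ s i)
    {x : Fin n → ℝ}
    (hx : ∀ a : Fin n → ℝ, (∀ i, 0 ≤ a i) →
      V.inf' hne (fun v => ∑ i, a i * (v i : ℝ)) ≤ ∑ i, a i * x i) :
    x ∈ NPoly f := by
  by_contra hxP
  rw [npoly_decomp hVS hcov] at hxP
  have hPconv : Convex ℝ (convexHull ℝ (toR '' ↑V) + orth n) :=
    (convex_convexHull ℝ _).add convex_orth
  have hPclosed : IsClosed (convexHull ℝ (toR '' ↑V) + orth n) :=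
    IsClosed.add_left_of_isCompact isClosed_orth (((V.finite_toSet.image _).isCompact_convexHull ℝ))
  obtain ⟨φ, u, hφx, hφP⟩ := geometric_hahn_banach_point_closed hPconv hPclosed hxP
  have hφP' : ∀ y ∈ NPoly f, u < φ y := by
    intro y hy; apply hφP; rwa [npoly_decomp hVS hcov] at hy
  set a : Fin n → ℝ := fun i => φ ((Pi.single i 1 : Fin n → ℝ)) with haDef
  have hφ : ∀ y : Fin n → ℝ, φ y = ∑ i, a i * y i := by
    intro y
    conv_lhs => rw [← Finset.univ_sum_single y]
    rw [map_sum]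
    refine Finset.sum_congr rfl fun i _ => ?_
    have h1 : Pi.single i (y i) = y i • (Pi.single i 1 : Fin n → ℝ) := by
      rw [← Pi.single_smul, smul_eq_mul, mul_one]
    rw [h1, φ.map_smul, smul_eq_mul, mul_comm]
  have hup : ∀ p ∈ NPoly f, ∀ y : Fin n → ℝ, (∀ i, p i ≤ y i) → y ∈ NPoly f := by
    intro p hp y hy
    rw [npoly_decomp hVS hcov, Set.mem_add] at hp ⊢
    obtain ⟨q, hq, c, hc, hqc⟩ := hp
    refine ⟨q, hq, c + (y - p), fun i => ?_, ?_⟩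
    · simp only [Pi.add_apply, Pi.sub_apply]
      have := hc i; have := hy i; linarith
    · rw [← add_assoc, hqc]; abel
  have hpos : ∀ i, 0 ≤ a i := by
    intro i
    by_contra hneg
    push_neg at hneg
    obtain ⟨v₀, hv₀⟩ := hne
    have hp : toR v₀ ∈ NPoly f := toR_mem_npoly hVS hv₀
    set t : ℝ := max 0 ((u - φ (toR v₀) - 1) / a i) with ht
    have ht0 : (0:ℝ) ≤ t := le_max_left _ _
    have hyP : toR v₀ + t • (Pi.single i 1 : Fin n → ℝ) ∈ NPoly f := by
      apply hup _ hp
      intro j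
      simp only [Pi.add_apply, Pi.smul_apply, smul_eq_mul]
      rcases eq_or_ne j i with rfl | hji
      · rw [Pi.single_eq_same]; nlinarith
      · rw [Pi.single_eq_of_ne hji]; simp
    have hval : φ (toR v₀ + t • (Pi.single i 1 : Fin n → ℝ)) = φ (toR v₀) + t * a i := by
      rw [map_add, φ.map_smul, smul_eq_mul]
    have h1 : (u - φ (toR v₀) - 1) / a i ≤ t := le_max_right _ _
    have h2 : t * a i ≤ u - φ (toR v₀) - 1 := by
      rw [div_le_iff_of_neg hneg] at h1; linarith
    have h3 := hφP' _ hyP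
    rw [hval] at h3
    linarith
  obtain ⟨v₁, hv₁, hval₁⟩ := Finset.exists_mem_eq_inf' hne (fun v => ∑ i, a i * (v i : ℝ))
  have h3 := hφP' _ (toR_mem_npoly hVS hv₁)
  rw [hφ (toR v₁)] at h3
  have h4 := hx a hpos
  rw [hval₁, ← hφ x] at h4
  have h5 : (∑ i, a i * toR v₁ i) = ∑ i, a i * (v₁ i : ℝ) := rfl
  rw [h5] at h3
  linarith

lemma mderiv_zero (f : (Fin n → ℝ) → ℝ) : mderiv (fun _ => 0) f = f := by
  have h : ∀ l : List (Fin n), (l.foldr (fun i g => (pd i)^[(0:ℕ)] g) f) = f := by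
    intro l
    induction l with
    | nil => rfl
    | cons a l ih => rw [List.foldr_cons, Function.iterate_zero_apply, ih]
  exact h _

lemma continuous_inf' {ι : Type*} {V : Finset ι} (hne : V.Nonempty) (g : ι → (Fin n → ℝ) → ℝ)
    (hg : ∀ v, Continuous (g v)) : Continuous fun a => V.inf' hne fun v => g v a := by
  induction hne using Finset.Nonempty.cons_induction with
  | singleton a =>
    have h : (fun x : Fin n → ℝ => Finset.inf' {a} (Finset.singleton_nonempty a) fun v => g v x)
        = g a := funext fun x => Finset.inf'_singleton _
    rw [h]; exact hg a
  | cons a s ha hs ih =>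
    have h : (fun x : Fin n → ℝ =>
          Finset.inf' (Finset.cons a s ha) (Finset.cons_nonempty ha) fun v => g v x)
        = fun x => min (g a x) (s.inf' hs fun v => g v x) :=
      funext fun x => Finset.inf'_cons hs _
    rw [h]; exact (hg a).min ih

lemma inf'_const_mul {ι : Type*} {V : Finset ι} (hne : V.Nonempty) (g : ι → ℝ) {c : ℝ}
    (hc : 0 ≤ c) : V.inf' hne (fun v => c * g v) = c * V.inf' hne g :=
  (Finset.apply_inf'_eq_inf'_comp hne (fun x => c * x) (fun x y => mul_min_of_nonneg x y hc)).symm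
end Stmt11Aux

/-- (i) `d·(Γ₊(g)+𝟏) ⊆ Γ₊(f)` iff `d(l_g(a)+⟨a,𝟏⟩) ≥ l_f(a)` for all
`a ∈ ℝ₊ⁿ`; (ii) `sup{-(l_g(a)+⟨a,𝟏⟩)/l_f(a) : a ∈ ℝ₊ⁿ, l_f(a) ≠ 0} = -1/d(f,g)`, the
supremum being attained. -/
theorem stmt11 (n : ℕ) (hn : 1 ≤ n) (U : Set (Fin n → ℝ)) (hU : IsOpen U)
    (h0 : (0 : Fin n → ℝ) ∈ U)
    (f g : (Fin n → ℝ) → ℝ)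
    (hfs : ContDiffOn ℝ (⊤ : ℕ∞) f U) (hgs : ContDiffOn ℝ (⊤ : ℕ∞) g U)
    (hfn : (NPoly f).Nonempty) (hgn : (NPoly g).Nonempty) (hf0 : f 0 = 0) :
    (∀ d : ℝ, 0 < d →
      ((∀ β ∈ NPoly g, (fun i => d * (β i + 1)) ∈ NPoly f) ↔
        ∀ a : Fin n → ℝ, (∀ i, 0 ≤ a i) → lfun f a ≤ d * (lfun g a + ∑ i, a i))) ∧
    IsGreatest {r : ℝ | ∃ a : Fin n → ℝ, (∀ i, 0 ≤ a i) ∧ lfun f a ≠ 0 ∧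
      r = -((lfun g a + ∑ i, a i) / lfun f a)} (-(1 / ndist f g)) := by
  classical
  -- nonempty Newton supports
  have hSf : (NewtonSupp f).Nonempty := by
    by_contra h
    rw [Set.not_nonempty_iff_eq_empty] at h
    have he : NPoly f = ∅ := by
      rw [NPoly, h]
      convert convexHull_empty
      ext x; simp
    rw [he] at hfn
    exact Set.not_nonempty_empty hfn
  have hSg : (NewtonSupp g).Nonempty := by
    by_contra h
    rw [Set.not_nonempty_iff_eq_empty] at h
    have he : NPoly g = ∅ := by
      rw [NPoly, h]
      convert convexHull_empty
      ext x; simp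
    rw [he] at hgn
    exact Set.not_nonempty_empty hgn
  obtain ⟨Vf, hVfne, hVfS, hVfcov⟩ := Stmt11Aux.dickson _ hSf
  obtain ⟨Vg, hVgne, hVgS, hVgcov⟩ := Stmt11Aux.dickson _ hSg
  have hlf : ∀ a : Fin n → ℝ, (∀ i, 0 ≤ a i) →
      lfun f a = Vf.inf' hVfne (fun v => ∑ i, a i * (v i : ℝ)) :=
    fun a ha => Stmt11Aux.lfun_eq hVfne hVfS hVfcov ha
  have hlg : ∀ a : Fin n → ℝ, (∀ i, 0 ≤ a i) →
      lfun g a = Vg.inf' hVgne (fun v => ∑ i, a i * (v i : ℝ)) :=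
    fun a ha => Stmt11Aux.lfun_eq hVgne hVgS hVgcov ha
  have hFnn : ∀ a : Fin n → ℝ, (∀ i, 0 ≤ a i) →
      (0:ℝ) ≤ Vf.inf' hVfne (fun v => ∑ i, a i * (v i : ℝ)) := by
    intro a ha
    exact Finset.le_inf' _ _ fun v _ =>
      Finset.sum_nonneg fun i _ => mul_nonneg (ha i) (Nat.cast_nonneg _)
  have hGnn : ∀ a : Fin n → ℝ, (∀ i, 0 ≤ a i) →
      (0:ℝ) ≤ Vg.inf' hVgne (fun v => ∑ i, a i * (v i : ℝ)) := by
    intro a ha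
    exact Finset.le_inf' _ _ fun v _ =>
      Finset.sum_nonneg fun i _ => mul_nonneg (ha i) (Nat.cast_nonneg _)
  have hlf_nonneg : ∀ a : Fin n → ℝ, (∀ i, 0 ≤ a i) → 0 ≤ lfun f a := by
    intro a ha; rw [hlf a ha]; exact hFnn a ha
  have hlg_nonneg : ∀ a : Fin n → ℝ, (∀ i, 0 ≤ a i) → 0 ≤ lfun g a := by
    intro a ha; rw [hlg a ha]; exact hGnn a ha
  -- Part (i)
  have main1 : ∀ d : ℝ, 0 < d →
      ((∀ β ∈ NPoly g, (fun i => d * (β i + 1)) ∈ NPoly f) ↔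
        ∀ a : Fin n → ℝ, (∀ i, 0 ≤ a i) → lfun f a ≤ d * (lfun g a + ∑ i, a i)) := by
    intro d hd
    constructor
    · intro hinc a ha
      rw [hlf a ha, hlg a ha]
      obtain ⟨v₀, hv₀, hval⟩ := Finset.exists_mem_eq_inf' hVgne (fun v => ∑ i, a i * (v i : ℝ))
      have hβ : Stmt11Aux.toR v₀ ∈ NPoly g := Stmt11Aux.toR_mem_npoly hVgS hv₀
      have hmem := hinc _ hβ
      have hub := Stmt11Aux.inf'_le_dot hVfne hVfS hVfcov ha hmem
      rw [hval]
      calc Vf.inf' hVfne (fun v => ∑ i, a i * (v i : ℝ))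
          ≤ ∑ i, a i * (d * (Stmt11Aux.toR v₀ i + 1)) := hub
        _ = d * ((∑ i, a i * (v₀ i : ℝ)) + ∑ i, a i) := by
            rw [mul_add, Finset.mul_sum, Finset.mul_sum, ← Finset.sum_add_distrib]
            exact Finset.sum_congr rfl fun i _ => by
              show a i * (d * ((v₀ i : ℝ) + 1)) = d * (a i * (v₀ i : ℝ)) + d * a i
              ring
    · intro hineq β hβ
      apply Stmt11Aux.mem_npoly_of_forall hVfne hVfS hVfcov
      intro a ha
      have h1 := hineq a ha
      rw [hlf a ha, hlg a ha] at h1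
      have h2 : Vg.inf' hVgne (fun v => ∑ i, a i * (v i : ℝ)) ≤ ∑ i, a i * β i :=
        Stmt11Aux.inf'_le_dot hVgne hVgS hVgcov ha hβ
      have h3 : (0:ℝ) ≤ ∑ i, a i := Finset.sum_nonneg fun i _ => ha i
      calc Vf.inf' hVfne (fun v => ∑ i, a i * (v i : ℝ))
          ≤ d * (Vg.inf' hVgne (fun v => ∑ i, a i * (v i : ℝ)) + ∑ i, a i) := h1
        _ ≤ d * ((∑ i, a i * β i) + ∑ i, a i) := by nlinarith
        _ = ∑ i, a i * (d * (β i + 1)) := by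
            rw [mul_add, Finset.mul_sum, Finset.mul_sum, ← Finset.sum_add_distrib]
            exact Finset.sum_congr rfl fun i _ => by ring
  -- Part (ii)
  set D := {d : ℝ | 0 < d ∧ ∀ β ∈ NPoly g, (fun i => d * (β i + 1)) ∈ NPoly f} with hD
  have hndist : ndist f g = sInf D := by rw [ndist]
  -- D is nonempty
  have hVfne' := hVfne
  obtain ⟨α₀, hα₀⟩ := hVfne'
  have hDne : D.Nonempty := by
    refine ⟨(∑ i, (α₀ i : ℝ)) + 1, ⟨by positivity, fun β hβ => ?_⟩⟩
    apply subset_convexHull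
    refine ⟨α₀, hVfS hα₀, fun i => ?_⟩
    have hβi : 0 ≤ β i := Stmt11Aux.npoly_subset_orth g hβ i
    have h1 : (α₀ i : ℝ) ≤ ∑ j, (α₀ j : ℝ) :=
      Finset.single_le_sum (f := fun j => (α₀ j : ℝ)) (fun j _ => Nat.cast_nonneg _)
        (Finset.mem_univ i)
    have h2 : (0:ℝ) ≤ ∑ j, (α₀ j : ℝ) := Finset.sum_nonneg fun j _ => Nat.cast_nonneg _
    show (α₀ i : ℝ) ≤ ((∑ j, (α₀ j : ℝ)) + 1) * (β i + 1)
    nlinarith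
  have hD_bdd : BddBelow D := ⟨0, fun d hd => hd.1.le⟩
  -- positive lower bound for D
  have hone : ∀ i : Fin n, (0:ℝ) ≤ (fun _ : Fin n => (1:ℝ)) i := fun i => zero_le_one
  have hsum_one : (∑ i : Fin n, (fun _ : Fin n => (1:ℝ)) i) = (n:ℝ) := by simp
  have hnR : (1:ℝ) ≤ (n:ℝ) := by exact_mod_cast hn
  have hKone : (0:ℝ) < lfun g (fun _ => (1:ℝ)) + (n:ℝ) := by
    have := hlg_nonneg (fun _ => (1:ℝ)) hone
    linarith
  have hlf_one : (1:ℝ) ≤ lfun f (fun _ => (1:ℝ)) := by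
    rw [hlf (fun _ => (1:ℝ)) hone]
    apply Finset.le_inf'
    intro v hv
    have hv0 : v ≠ (fun _ => 0) := by
      intro h
      have hmem := hVfS hv
      rw [h] at hmem
      apply hmem
      rw [Stmt11Aux.mderiv_zero]
      exact hf0
    have hex : ∃ i, 1 ≤ v i := by
      by_contra hcon
      push_neg at hcon
      exact hv0 (funext fun i => by have := hcon i; omega)
    obtain ⟨i, hi⟩ := hex
    have h4 : (1:ℝ) ≤ (v i : ℝ) := by exact_mod_cast hi
    have hred : ∑ j, (fun _ : Fin n => (1:ℝ)) j * (v j : ℝ) = ∑ j, (v j : ℝ) := by simp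
    show (1:ℝ) ≤ ∑ j, (fun _ : Fin n => (1:ℝ)) j * (v j : ℝ)
    rw [hred]
    calc (1:ℝ) ≤ (v i : ℝ) := h4
      _ ≤ ∑ j, (v j : ℝ) :=
          Finset.single_le_sum (f := fun j => (v j : ℝ)) (fun j _ => Nat.cast_nonneg _)
            (Finset.mem_univ i)
  have hD_lb : ∀ d ∈ D, 1 / (lfun g (fun _ => (1:ℝ)) + (n:ℝ)) ≤ d := by
    intro d hd
    have h1 := (main1 d hd.1).mp hd.2 (fun _ => (1:ℝ)) hone
    rw [hsum_one] at h1
    rw [div_le_iff₀ hKone]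
    nlinarith
  have hd0pos : 0 < ndist f g := by
    rw [hndist]
    calc (0:ℝ) < 1 / (lfun g (fun _ => (1:ℝ)) + (n:ℝ)) := by positivity
      _ ≤ sInf D := le_csInf hDne hD_lb
  -- the inequality at d₀ = ndist f g
  have hstep : ∀ d : ℝ, ndist f g < d → ∀ a : Fin n → ℝ, (∀ i, 0 ≤ a i) →
      lfun f a ≤ d * (lfun g a + ∑ i, a i) := by
    intro d hd a ha
    rw [hndist] at hd
    obtain ⟨d', hd'D, hd'lt⟩ := exists_lt_of_csInf_lt hDne hd
    have h1 := (main1 d' hd'D.1).mp hd'D.2 a ha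
    have hK : 0 ≤ lfun g a + ∑ i, a i := by
      have h2 := hlg_nonneg a ha
      have h3 : (0:ℝ) ≤ ∑ i, a i := Finset.sum_nonneg fun i _ => ha i
      linarith
    nlinarith
  have hmain_ineq : ∀ a : Fin n → ℝ, (∀ i, 0 ≤ a i) →
      lfun f a ≤ ndist f g * (lfun g a + ∑ i, a i) := by
    intro a ha
    have hK : 0 ≤ lfun g a + ∑ i, a i := by
      have h2 := hlg_nonneg a ha
      have h3 : (0:ℝ) ≤ ∑ i, a i := Finset.sum_nonneg fun i _ => ha i
      linarith
    rcases eq_or_lt_of_le hK with hK0 | hKpos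
    · have h := hstep (ndist f g + 1) (lt_add_one _) a ha
      rw [← hK0] at h ⊢
      simpa using h
    · by_contra hcon
      push_neg at hcon
      have h2 : ndist f g < lfun f a / (lfun g a + ∑ i, a i) := (lt_div_iff₀ hKpos).2 (by linarith)
      have h3 := hstep ((ndist f g + lfun f a / (lfun g a + ∑ i, a i)) / 2) (by linarith) a ha
      have h4 : lfun f a / (lfun g a + ∑ i, a i) * (lfun g a + ∑ i, a i) = lfun f a :=
        div_mul_cancel₀ _ hKpos.ne'
      nlinarith
  -- the simplex
  set Δ : Set (Fin n → ℝ) := {a | (∀ i, 0 ≤ a i) ∧ ∑ i, a i = 1} with hΔdef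
  have hsumcont : Continuous fun a : Fin n → ℝ => ∑ i, a i :=
    continuous_finset_sum _ fun i _ => continuous_apply i
  have hΔclosed : IsClosed Δ := by
    have h1 : Δ = (⋂ i, {a : Fin n → ℝ | 0 ≤ a i}) ∩ {a | ∑ i, a i = 1} := by
      ext a; simp [hΔdef, Set.mem_iInter]
    rw [h1]
    exact (isClosed_iInter fun i => isClosed_le continuous_const (continuous_apply i)).inter
      (isClosed_eq hsumcont continuous_const)
  have hΔcpt : IsCompact Δ := by
    apply IsCompact.of_isClosed_subset
      (isCompact_Icc (a := (0 : Fin n → ℝ)) (b := fun _ => (1:ℝ))) hΔclosed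
    intro a ha
    rw [Set.mem_Icc]
    refine ⟨fun i => ha.1 i, fun i => ?_⟩
    calc a i ≤ ∑ j, a j := Finset.single_le_sum (fun j _ => ha.1 j) (Finset.mem_univ i)
      _ = 1 := ha.2
  have hΔne : Δ.Nonempty := by
    refine ⟨Pi.single (⟨0, hn⟩ : Fin n) (1:ℝ), fun i => ?_, ?_⟩
    · rw [Pi.single_apply]; split <;> norm_num
    · simp [Finset.sum_pi_single']
  -- the continuous ratio function
  have hFcont : Continuous fun a : Fin n → ℝ => Vf.inf' hVfne (fun v => ∑ i, a i * (v i : ℝ)) :=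
    Stmt11Aux.continuous_inf' hVfne _ fun v =>
      continuous_finset_sum _ fun i _ => (continuous_apply i).mul continuous_const
  have hGcont : Continuous fun a : Fin n → ℝ => Vg.inf' hVgne (fun v => ∑ i, a i * (v i : ℝ)) :=
    Stmt11Aux.continuous_inf' hVgne _ fun v =>
      continuous_finset_sum _ fun i _ => (continuous_apply i).mul continuous_const
  have hden_pos : ∀ a ∈ Δ, (0:ℝ) < Vg.inf' hVgne (fun v => ∑ i, a i * (v i : ℝ)) + ∑ i, a i := by
    intro a ha
    have h1 := hGnn a ha.1
    rw [ha.2]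
    linarith
  have hφcont : ContinuousOn (fun a : Fin n → ℝ =>
      Vf.inf' hVfne (fun v => ∑ i, a i * (v i : ℝ)) /
        (Vg.inf' hVgne (fun v => ∑ i, a i * (v i : ℝ)) + ∑ i, a i)) Δ :=
    hFcont.continuousOn.div ((hGcont.add hsumcont).continuousOn)
      (fun a ha => (hden_pos a ha).ne')
  obtain ⟨astar, hastar, hmax⟩ := hΔcpt.exists_isMaxOn hΔne hφcont
  have hmaxle : ∀ b ∈ Δ,
      Vf.inf' hVfne (fun v => ∑ i, b i * (v i : ℝ)) /
        (Vg.inf' hVgne (fun v => ∑ i, b i * (v i : ℝ)) + ∑ i, b i) ≤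
      Vf.inf' hVfne (fun v => ∑ i, astar i * (v i : ℝ)) /
        (Vg.inf' hVgne (fun v => ∑ i, astar i * (v i : ℝ)) + ∑ i, astar i) :=
    fun b hb => hmax hb
  have hdenstar_pos := hden_pos astar hastar
  -- max value is at most d₀
  have hEle : Vf.inf' hVfne (fun v => ∑ i, astar i * (v i : ℝ)) /
      (Vg.inf' hVgne (fun v => ∑ i, astar i * (v i : ℝ)) + ∑ i, astar i) ≤ ndist f g := by
    rw [div_le_iff₀ hdenstar_pos]
    have h1 := hmain_ineq astar hastar.1
    rw [hlf astar hastar.1, hlg astar hastar.1] at h1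
    linarith
  -- max value is at least d₀
  have hsup : ∀ d : ℝ, 0 < d → d < ndist f g →
      d < Vf.inf' hVfne (fun v => ∑ i, astar i * (v i : ℝ)) /
        (Vg.inf' hVgne (fun v => ∑ i, astar i * (v i : ℝ)) + ∑ i, astar i) := by
    intro d hdpos hdlt
    have hdD : d ∉ D := by
      intro hmem
      have := csInf_le hD_bdd hmem
      rw [← hndist] at this
      linarith
    have hnot : ¬ ∀ a : Fin n → ℝ, (∀ i, 0 ≤ a i) →
        lfun f a ≤ d * (lfun g a + ∑ i, a i) := by
      intro h
      exact hdD ⟨hdpos, (main1 d hdpos).mpr h⟩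
    push_neg at hnot
    obtain ⟨a, ha, hgt⟩ := hnot
    rw [hlf a ha, hlg a ha] at hgt
    have hGa := hGnn a ha
    have hsum_nn : (0:ℝ) ≤ ∑ i, a i := Finset.sum_nonneg fun i _ => ha i
    have hFpos : 0 < Vf.inf' hVfne (fun v => ∑ i, a i * (v i : ℝ)) := by nlinarith
    have hs : 0 < ∑ i, a i := by
      rcases hsum_nn.lt_or_eq with h | h
      · exact h
      · exfalso
        have hzero : ∀ i, a i = 0 := fun i =>
          (Finset.sum_eq_zero_iff_of_nonneg (fun i _ => ha i)).1 h.symm i (Finset.mem_univ i)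
        have hF0 : Vf.inf' hVfne (fun v => ∑ i, a i * (v i : ℝ)) = 0 := by
          obtain ⟨v₀, hv₀, hval⟩ := Finset.exists_mem_eq_inf' hVfne
            (fun v => ∑ i, a i * (v i : ℝ))
          rw [hval]
          exact Finset.sum_eq_zero fun i _ => by rw [hzero i, zero_mul]
        rw [hF0] at hFpos
        exact lt_irrefl 0 hFpos
    -- normalize
    have hbΔ : (fun i => a i / (∑ j, a j)) ∈ Δ := by
      refine ⟨fun i => div_nonneg (ha i) hs.le, ?_⟩
      rw [← Finset.sum_div, div_self hs.ne']
    have hFb : Vf.inf' hVfne (fun v => ∑ i, (a i / (∑ j, a j)) * (v i : ℝ)) =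
        (1 / (∑ j, a j)) * Vf.inf' hVfne (fun v => ∑ i, a i * (v i : ℝ)) := by
      rw [← Stmt11Aux.inf'_const_mul hVfne _ (by positivity : (0:ℝ) ≤ 1 / (∑ j, a j))]
      refine Finset.inf'_congr hVfne rfl fun v _ => ?_
      rw [Finset.mul_sum]
      exact Finset.sum_congr rfl fun i _ => by ring
    have hGb : Vg.inf' hVgne (fun v => ∑ i, (a i / (∑ j, a j)) * (v i : ℝ)) =
        (1 / (∑ j, a j)) * Vg.inf' hVgne (fun v => ∑ i, a i * (v i : ℝ)) := by
      rw [← Stmt11Aux.inf'_const_mul hVgne _ (by positivity : (0:ℝ) ≤ 1 / (∑ j, a j))]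
      refine Finset.inf'_congr hVgne rfl fun v _ => ?_
      rw [Finset.mul_sum]
      exact Finset.sum_congr rfl fun i _ => by ring
    have hsumb : (∑ i, a i / (∑ j, a j)) = 1 := by
      rw [← Finset.sum_div, div_self hs.ne']
    have hφbeq : Vf.inf' hVfne (fun v => ∑ i, (a i / (∑ j, a j)) * (v i : ℝ)) /
        (Vg.inf' hVgne (fun v => ∑ i, (a i / (∑ j, a j)) * (v i : ℝ)) + ∑ i, a i / (∑ j, a j)) =
        Vf.inf' hVfne (fun v => ∑ i, a i * (v i : ℝ)) /
          (Vg.inf' hVgne (fun v => ∑ i, a i * (v i : ℝ)) + ∑ j, a j) := by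
      rw [hFb, hGb, hsumb]
      have h3 : (1 / (∑ j, a j)) * Vg.inf' hVgne (fun v => ∑ i, a i * (v i : ℝ)) + 1 =
          (1 / (∑ j, a j)) * (Vg.inf' hVgne (fun v => ∑ i, a i * (v i : ℝ)) + ∑ j, a j) := by
        field_simp
      rw [h3, mul_div_mul_left _ _ (by positivity : (1:ℝ) / (∑ j, a j) ≠ 0)]
    have hφb : d < Vf.inf' hVfne (fun v => ∑ i, (a i / (∑ j, a j)) * (v i : ℝ)) /
        (Vg.inf' hVgne (fun v => ∑ i, (a i / (∑ j, a j)) * (v i : ℝ)) + ∑ i, a i / (∑ j, a j)) := by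
      rw [hφbeq, lt_div_iff₀ (by linarith : (0:ℝ) <
        Vg.inf' hVgne (fun v => ∑ i, a i * (v i : ℝ)) + ∑ j, a j)]
      linarith
    exact lt_of_lt_of_le hφb (hmaxle _ hbΔ)
  have hEge : ndist f g ≤ Vf.inf' hVfne (fun v => ∑ i, astar i * (v i : ℝ)) /
      (Vg.inf' hVgne (fun v => ∑ i, astar i * (v i : ℝ)) + ∑ i, astar i) := by
    apply le_of_forall_lt
    intro c hc
    rcases le_or_gt c 0 with h | h
    · have := hsup (ndist f g / 2) (by linarith) (by linarith)
      linarith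
    · have := hsup ((c + ndist f g) / 2) (by linarith) (by linarith)
      linarith
  have hEeq : Vf.inf' hVfne (fun v => ∑ i, astar i * (v i : ℝ)) /
      (Vg.inf' hVgne (fun v => ∑ i, astar i * (v i : ℝ)) + ∑ i, astar i) = ndist f g :=
    le_antisymm hEle hEge
  -- conclude
  have hlfstar : lfun f astar = ndist f g *
      (Vg.inf' hVgne (fun v => ∑ i, astar i * (v i : ℝ)) + ∑ i, astar i) := by
    rw [hlf astar hastar.1]
    rw [div_eq_iff hdenstar_pos.ne'] at hEeq
    linarith [hEeq]
  have hlfstar_pos : 0 < lfun f astar := by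
    rw [hlfstar]
    exact mul_pos hd0pos hdenstar_pos
  have hratio : (lfun g astar + ∑ i, astar i) / lfun f astar = 1 / ndist f g := by
    rw [hlg astar hastar.1, hlfstar]
    rw [div_eq_div_iff (mul_pos hd0pos hdenstar_pos).ne' hd0pos.ne']
    ring
  refine ⟨main1, ⟨⟨astar, hastar.1, hlfstar_pos.ne', by rw [hratio]⟩, ?_⟩⟩
  rintro r ⟨a, ha, hne0, rfl⟩
  have hfa_pos : 0 < lfun f a := (hlf_nonneg a ha).lt_of_ne (Ne.symm hne0)
  have h1 := hmain_ineq a ha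
  have h2 : 1 / ndist f g ≤ (lfun g a + ∑ i, a i) / lfun f a := by
    rw [div_le_div_iff₀ hd0pos hfa_pos]
    linarith
  linarith
end
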